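/- arXiv:1606.00300 — 3 statements merged into one kernel-verified Lean document; each statement's English description precedes it below -/
import Mathlib

section
/- Five distinct points in the projective plane over a field lie in general position (no three collinear) if and only if they lie on a smooth conic. -/
/-- Three points (given by coordinate vectors) in `ℙ²(k)` are collinear:
there is a nonzero linear form vanishing at all three. -/
def Collinear3 {k : Type*} [Field k] (a b c : Fin 3 → k) : Prop :=
  ∃ f : (Fin 3 → k) →ₗ[k] k, f ≠ 0 ∧ f a = 0 ∧ f b = 0 ∧ f c = 0

/-- A plane conic (homogeneous quadratic form) is smooth: at no point of the zero locus
over the algebraic closure do all partial derivatives vanish. -/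
def SmoothPlaneCurve {k : Type*} [Field k] (Q : MvPolynomial (Fin 3) k) : Prop :=
  ∀ v : Fin 3 → AlgebraicClosure k, v ≠ 0 → MvPolynomial.aeval v Q = 0 →
    ∃ i : Fin 3, MvPolynomial.aeval v (MvPolynomial.pderiv i Q) ≠ 0


open MvPolynomial

namespace FivePts

variable {k : Type*} [Field k]

/-- evaluation of the conic with coefficient vector `c` -/
def ev (c : Fin 6 → k) (x : Fin 3 → k) : k :=
  c 0 * x 0 ^ 2 + c 1 * x 1 ^ 2 + c 2 * x 2 ^ 2 +
    c 3 * x 0 * x 1 + c 4 * x 0 * x 2 + c 5 * x 1 * x 2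

/-- gradient vector -/
def gradv (c : Fin 6 → k) (x : Fin 3 → k) : Fin 3 → k :=
  ![2 * c 0 * x 0 + c 3 * x 1 + c 4 * x 2,
    2 * c 1 * x 1 + c 3 * x 0 + c 5 * x 2,
    2 * c 2 * x 2 + c 4 * x 0 + c 5 * x 1]

/-- polar form -/
def bf (c : Fin 6 → k) (x y : Fin 3 → k) : k :=
  x 0 * gradv c y 0 + x 1 * gradv c y 1 + x 2 * gradv c y 2

lemma bf_symm (c : Fin 6 → k) (x y : Fin 3 → k) : bf c x y = bf c y x := by
  simp [bf, gradv]; ring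

lemma ev_polar (c : Fin 6 → k) (s t : k) (x y : Fin 3 → k) :
    ev c (s • x + t • y) = s ^ 2 * ev c x + t ^ 2 * ev c y + s * t * bf c x y := by
  simp [ev, bf, gradv, Pi.add_apply, Pi.smul_apply, smul_eq_mul]; ring

lemma gradv_comb (c : Fin 6 → k) (s t : k) (x y : Fin 3 → k) :
    gradv c (s • x + t • y) = s • gradv c x + t • gradv c y := by
  funext i; fin_cases i <;> simp [gradv, Pi.add_apply, Pi.smul_apply, smul_eq_mul] <;> ring

lemma ev_zero_coeffs (c : Fin 6 → k) (h : ∀ x, ev c x = 0) : c = 0 := by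
  have h0 := h ![1,0,0]
  have h1 := h ![0,1,0]
  have h2 := h ![0,0,1]
  have h3 := h ![1,1,0]
  have h4 := h ![1,0,1]
  have h5 := h ![0,1,1]
  simp [ev] at h0 h1 h2 h3 h4 h5
  funext i; fin_cases i <;> simp_all

noncomputable def qpoly (c : Fin 6 → k) : MvPolynomial (Fin 3) k :=
  C (c 0) * X 0 ^ 2 + C (c 1) * X 1 ^ 2 + C (c 2) * X 2 ^ 2 +
    C (c 3) * X 0 * X 1 + C (c 4) * X 0 * X 2 + C (c 5) * X 1 * X 2

lemma eval_qpoly (c : Fin 6 → k) (x : Fin 3 → k) : eval x (qpoly c) = ev c x := by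
  rw [qpoly]; simp [ev]

lemma qpoly_isHomogeneous (c : Fin 6 → k) : (qpoly c).IsHomogeneous 2 := by
  have h0 : (C (c 0) * X 0 ^ 2 : MvPolynomial (Fin 3) k).IsHomogeneous 2 := by
    simpa using (isHomogeneous_C (Fin 3) (c 0)).mul ((isHomogeneous_X k (0:Fin 3)).pow 2)
  have h1 : (C (c 1) * X 1 ^ 2 : MvPolynomial (Fin 3) k).IsHomogeneous 2 := by
    simpa using (isHomogeneous_C (Fin 3) (c 1)).mul ((isHomogeneous_X k (1:Fin 3)).pow 2)
  have h2 : (C (c 2) * X 2 ^ 2 : MvPolynomial (Fin 3) k).IsHomogeneous 2 := by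
    simpa using (isHomogeneous_C (Fin 3) (c 2)).mul ((isHomogeneous_X k (2:Fin 3)).pow 2)
  have h3 : (C (c 3) * X 0 * X 1 : MvPolynomial (Fin 3) k).IsHomogeneous 2 := by
    simpa [mul_assoc] using (isHomogeneous_C (Fin 3) (c 3)).mul
      ((isHomogeneous_X k (0:Fin 3)).mul (isHomogeneous_X k (1:Fin 3)))
  have h4 : (C (c 4) * X 0 * X 2 : MvPolynomial (Fin 3) k).IsHomogeneous 2 := by
    simpa [mul_assoc] using (isHomogeneous_C (Fin 3) (c 4)).mul
      ((isHomogeneous_X k (0:Fin 3)).mul (isHomogeneous_X k (2:Fin 3)))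
  have h5 : (C (c 5) * X 1 * X 2 : MvPolynomial (Fin 3) k).IsHomogeneous 2 := by
    simpa [mul_assoc] using (isHomogeneous_C (Fin 3) (c 5)).mul
      ((isHomogeneous_X k (1:Fin 3)).mul (isHomogeneous_X k (2:Fin 3)))
  exact ((((h0.add h1).add h2).add h3).add h4).add h5


lemma degree_fin3 (d : Fin 3 →₀ ℕ) : d.degree = d 0 + d 1 + d 2 := by
  rw [Finsupp.degree_apply]
  rw [Finset.sum_subset (Finset.subset_univ _)
    (fun i _ hi => Finsupp.notMem_support_iff.mp hi)]
  simp [Fin.sum_univ_three]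

lemma hclass (d : Fin 3 →₀ ℕ) (hd : d.degree = 2) :
    d = Finsupp.single 0 2 ∨ d = Finsupp.single 1 2 ∨ d = Finsupp.single 2 2 ∨
    d = Finsupp.single 0 1 + Finsupp.single 1 1 ∨
    d = Finsupp.single 0 1 + Finsupp.single 2 1 ∨
    d = Finsupp.single 1 1 + Finsupp.single 2 1 := by
  rw [degree_fin3] at hd
  rcases (by omega : (d 0 = 2 ∧ d 1 = 0 ∧ d 2 = 0) ∨ (d 0 = 0 ∧ d 1 = 2 ∧ d 2 = 0) ∨
      (d 0 = 0 ∧ d 1 = 0 ∧ d 2 = 2) ∨ (d 0 = 1 ∧ d 1 = 1 ∧ d 2 = 0) ∨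
      (d 0 = 1 ∧ d 1 = 0 ∧ d 2 = 1) ∨ (d 0 = 0 ∧ d 1 = 1 ∧ d 2 = 1)) with
    ⟨a,b,c⟩|⟨a,b,c⟩|⟨a,b,c⟩|⟨a,b,c⟩|⟨a,b,c⟩|⟨a,b,c⟩
  · exact Or.inl (Finsupp.ext fun j => by fin_cases j <;>
      simp_all [Finsupp.single_apply])
  · refine Or.inr (Or.inl (Finsupp.ext fun j => by fin_cases j <;>
      simp_all [Finsupp.single_apply]))
  · refine Or.inr (Or.inr (Or.inl (Finsupp.ext fun j => by fin_cases j <;>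
      simp_all [Finsupp.single_apply])))
  · refine Or.inr (Or.inr (Or.inr (Or.inl (Finsupp.ext fun j => by fin_cases j <;>
      simp_all [Finsupp.single_apply]))))
  · refine Or.inr (Or.inr (Or.inr (Or.inr (Or.inl (Finsupp.ext fun j => by fin_cases j <;>
      simp_all [Finsupp.single_apply])))))
  · exact Or.inr (Or.inr (Or.inr (Or.inr (Or.inr (Finsupp.ext fun j => by fin_cases j <;>
      simp_all [Finsupp.single_apply])))))


lemma fin3_ext_iff (d e : Fin 3 →₀ ℕ) : d = e ↔ d 0 = e 0 ∧ d 1 = e 1 ∧ d 2 = e 2 := by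
  constructor
  · rintro rfl; exact ⟨rfl, rfl, rfl⟩
  · rintro ⟨h0, h1, h2⟩; ext j; fin_cases j <;> assumption

lemma qpoly_monomials (c : Fin 6 → k) : qpoly c =
    monomial (Finsupp.single 0 2) (c 0) + monomial (Finsupp.single 1 2) (c 1) +
    monomial (Finsupp.single 2 2) (c 2) +
    monomial (Finsupp.single 0 1 + Finsupp.single 1 1) (c 3) +
    monomial (Finsupp.single 0 1 + Finsupp.single 2 1) (c 4) +
    monomial (Finsupp.single 1 1 + Finsupp.single 2 1) (c 5) := by
  rw [qpoly]
  have hX : ∀ i : Fin 3, (X i : MvPolynomial (Fin 3) k) = monomial (Finsupp.single i 1) 1 := by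
    intro i; rfl
  simp only [hX, monomial_pow, monomial_mul, C_mul_monomial, mul_one, one_pow,
    Finsupp.smul_single, smul_eq_mul, mul_one, Nat.mul_one]

lemma isHomogeneous_two_repr {Q : MvPolynomial (Fin 3) k} (hQ : Q.IsHomogeneous 2) :
    ∃ c : Fin 6 → k, Q = qpoly c := by
  classical
  refine ⟨![coeff (Finsupp.single 0 2) Q, coeff (Finsupp.single 1 2) Q,
    coeff (Finsupp.single 2 2) Q, coeff (Finsupp.single 0 1 + Finsupp.single 1 1) Q,
    coeff (Finsupp.single 0 1 + Finsupp.single 2 1) Q,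
    coeff (Finsupp.single 1 1 + Finsupp.single 2 1) Q], ?_⟩
  apply MvPolynomial.ext
  intro d
  by_cases hd : d.degree = 2
  · rcases hclass d hd with h|h|h|h|h|h <;> subst h <;>
      rw [qpoly_monomials] <;>
      simp [coeff_add, coeff_monomial, fin3_ext_iff, Finsupp.single_apply, Finsupp.add_apply] <;> rfl
  · rw [hQ.coeff_eq_zero hd, ((qpoly_isHomogeneous _).coeff_eq_zero hd : _)]


/-! ### cross product and collinearity -/

def dot3 (u w : Fin 3 → k) : k := u 0 * w 0 + u 1 * w 1 + u 2 * w 2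

def cp (u w : Fin 3 → k) : Fin 3 → k :=
  ![u 1 * w 2 - u 2 * w 1, u 2 * w 0 - u 0 * w 2, u 0 * w 1 - u 1 * w 0]

lemma cp_cp (u w x : Fin 3 → k) :
    cp (cp u w) x = dot3 u x • w - dot3 w x • u := by
  funext i; fin_cases i <;> simp [cp, dot3] <;> ring

lemma exists_coord_ne (u : Fin 3 → k) (hu : u ≠ 0) : u 0 ≠ 0 ∨ u 1 ≠ 0 ∨ u 2 ≠ 0 := by
  by_contra h
  push_neg at h
  exact hu (funext fun i => by fin_cases i <;> simp [h.1, h.2.1, h.2.2])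

lemma cp_parallel (u w : Fin 3 → k) (hu : u ≠ 0) (h : cp u w = 0) : ∃ d : k, w = d • u := by
  have h0 := congrFun h 0
  have h1 := congrFun h 1
  have h2 := congrFun h 2
  simp [cp, sub_eq_zero] at h0 h1 h2
  rcases exists_coord_ne u hu with hc | hc | hc
  · refine ⟨w 0 / u 0, ?_⟩
    have e1 : w 1 = w 0 / u 0 * u 1 := by field_simp; linear_combination h2
    have e2 : w 2 = w 0 / u 0 * u 2 := by field_simp; linear_combination -h1
    funext i; fin_cases i
    · show w 0 = w 0 / u 0 * u 0; field_simp
    · exact e1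
    · exact e2
  · refine ⟨w 1 / u 1, ?_⟩
    have e0 : w 0 = w 1 / u 1 * u 0 := by field_simp; linear_combination -h2
    have e2 : w 2 = w 1 / u 1 * u 2 := by field_simp; linear_combination h0
    funext i; fin_cases i
    · exact e0
    · show w 1 = w 1 / u 1 * u 1; field_simp
    · exact e2
  · refine ⟨w 2 / u 2, ?_⟩
    have e0 : w 0 = w 2 / u 2 * u 0 := by field_simp; linear_combination h1
    have e1 : w 1 = w 2 / u 2 * u 1 := by field_simp; linear_combination -h0
    funext i; fin_cases i
    · exact e0
    · exact e1
    · show w 2 = w 2 / u 2 * u 2; field_simp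

lemma dot3_eq_sum (a y : Fin 3 → k) : (∑ i, a i * y i) = dot3 a y := by
  simp [Fin.sum_univ_three, dot3]

lemma mulVec3 (a b c y : Fin 3 → k) :
    (Matrix.of ![a, b, c]).mulVec y = ![dot3 a y, dot3 b y, dot3 c y] := by
  funext r
  fin_cases r <;> simp [Matrix.mulVec, dotProduct, Fin.sum_univ_three, dot3]

lemma collinear3_iff_det (a b c : Fin 3 → k) :
    Collinear3 a b c ↔ (Matrix.of ![a, b, c]).det = 0 := by
  rw [← Matrix.exists_mulVec_eq_zero_iff]
  constructor
  · rintro ⟨f, hf, ha, hb, hc⟩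
    set y : Fin 3 → k := fun i => f fun j => if i = j then 1 else 0 with hy
    have key : ∀ x : Fin 3 → k, f x = dot3 x y := by
      intro x
      rw [LinearMap.pi_apply_eq_sum_univ f x, ← dot3_eq_sum]
      simp [smul_eq_mul, hy]
    refine ⟨y, ?_, ?_⟩
    · intro hy0
      apply hf
      apply LinearMap.ext fun x => ?_
      rw [key x, hy0]
      simp [dot3]
    · rw [mulVec3, ← key a, ← key b, ← key c, ha, hb, hc]
      funext r; fin_cases r <;> rfl
  · rintro ⟨y, hy, hmy⟩
    rw [mulVec3] at hmy
    have ha' : dot3 a y = 0 := by simpa using congrFun hmy 0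
    have hb' : dot3 b y = 0 := by simpa using congrFun hmy 1
    have hc' : dot3 c y = 0 := by simpa using congrFun hmy 2
    simp [dot3] at ha' hb' hc'
    refine ⟨∑ i, y i • LinearMap.proj i, ?_, ?_, ?_, ?_⟩
    · intro hf0
      rcases exists_coord_ne y hy with h' | h' | h'
      · apply h'
        simpa [LinearMap.proj_apply, Fin.sum_univ_three] using
          LinearMap.congr_fun hf0 (fun j => if j = 0 then (1:k) else 0)
      · apply h'
        simpa [LinearMap.proj_apply, Fin.sum_univ_three] using
          LinearMap.congr_fun hf0 (fun j => if j = 1 then (1:k) else 0)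
      · apply h'
        simpa [LinearMap.proj_apply, Fin.sum_univ_three] using
          LinearMap.congr_fun hf0 (fun j => if j = 2 then (1:k) else 0)
    · simp [LinearMap.proj_apply, Fin.sum_univ_three]; linear_combination ha'
    · simp [LinearMap.proj_apply, Fin.sum_univ_three]; linear_combination hb'
    · simp [LinearMap.proj_apply, Fin.sum_univ_three]; linear_combination hc'

/-! ### evaluation over an extension -/

section Ext

variable {K : Type*} [Field K] [Algebra k K]

lemma ev_map (c : Fin 6 → k) (x : Fin 3 → k) :
    ev (algebraMap k K ∘ c) (algebraMap k K ∘ x) = algebraMap k K (ev c x) := by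
  simp [ev, map_add, map_mul, map_pow]

lemma aeval_qpoly (c : Fin 6 → k) (v : Fin 3 → K) :
    MvPolynomial.aeval v (qpoly c) = ev (algebraMap k K ∘ c) v := by
  rw [qpoly]
  simp [ev, MvPolynomial.aeval_X, MvPolynomial.aeval_C]

lemma aeval_pderiv_qpoly (c : Fin 6 → k) (v : Fin 3 → K) (i : Fin 3) :
    MvPolynomial.aeval v (MvPolynomial.pderiv i (qpoly c)) =
      gradv (algebraMap k K ∘ c) v i := by
  fin_cases i <;>
  · rw [qpoly]
    simp [MvPolynomial.pderiv_mul, MvPolynomial.pderiv_pow, MvPolynomial.pderiv_C,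
      MvPolynomial.pderiv_X, Pi.single_apply, gradv]
    ring

end Ext

lemma dot3_comm (u w : Fin 3 → k) : dot3 u w = dot3 w u := by simp [dot3]; ring

/-! ### factoring binary quadratics over an algebraically closed field -/

lemma binfac {K : Type*} [Field K] [IsAlgClosed K] (α β γ : K)
    (h : ¬(α = 0 ∧ β = 0 ∧ γ = 0)) :
    ∃ p q r s : K, ¬(p = 0 ∧ q = 0) ∧ ¬(r = 0 ∧ s = 0) ∧
      ∀ t u : K, α * t ^ 2 + β * t * u + γ * u ^ 2 = (p * t + q * u) * (r * t + s * u) := by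
  by_cases hα : α = 0
  · refine ⟨β, γ, 0, 1, ?_, by simp, fun t u => by rw [hα]; ring⟩
    intro ⟨hβ, hγ⟩; exact h ⟨hα, hβ, hγ⟩
  · have hdeg : (Polynomial.C α * Polynomial.X ^ 2 + Polynomial.C β * Polynomial.X +
        Polynomial.C γ).degree ≠ 0 := by
      rw [Polynomial.degree_quadratic hα]; norm_num
    obtain ⟨z, hz⟩ := IsAlgClosed.exists_root _ hdeg
    have hroot : α * z ^ 2 + β * z + γ = 0 := by
      simpa [Polynomial.IsRoot, sq] using hz
    refine ⟨α, -α * z, 1, β / α + z, fun h0 => hα h0.1, by simp, fun t u => ?_⟩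
    field_simp
    ring_nf
    linear_combination (u ^ 2) * hroot

/-! ### pigeonhole -/

lemma ex3 (p : Fin 5 → Prop) [DecidablePred p] (h : 3 ≤ (Finset.univ.filter p).card) :
    ∃ i j l : Fin 5, i ≠ j ∧ i ≠ l ∧ j ≠ l ∧ p i ∧ p j ∧ p l := by
  obtain ⟨t, ht, hcard⟩ := Finset.exists_subset_card_eq h
  obtain ⟨i, j, l, hij, hil, hjl, rfl⟩ := Finset.card_eq_three.mp hcard
  have hi := ht (by simp : i ∈ ({i,j,l} : Finset (Fin 5)))
  have hj := ht (by simp : j ∈ ({i,j,l} : Finset (Fin 5)))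
  have hl := ht (by simp : l ∈ ({i,j,l} : Finset (Fin 5)))
  simp only [Finset.mem_filter] at hi hj hl
  exact ⟨i, j, l, hij, hil, hjl, hi.2, hj.2, hl.2⟩

lemma pigeon3 {p1 p2 : Fin 5 → Prop} (h : ∀ m, p1 m ∨ p2 m) :
    ∃ i j l : Fin 5, i ≠ j ∧ i ≠ l ∧ j ≠ l ∧
      ((p1 i ∧ p1 j ∧ p1 l) ∨ (p2 i ∧ p2 j ∧ p2 l)) := by
  classical
  by_cases h3 : 3 ≤ (Finset.univ.filter p1).card
  · obtain ⟨i,j,l,hij,hil,hjl,h1,h2,h3⟩ := ex3 p1 h3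
    exact ⟨i,j,l,hij,hil,hjl, Or.inl ⟨h1,h2,h3⟩⟩
  · have hsplit := Finset.card_filter_add_card_filter_not
      (s := (Finset.univ : Finset (Fin 5))) (p := p1)
    have hsub : (Finset.univ.filter (fun m => ¬ p1 m)) ⊆ Finset.univ.filter p2 := by
      intro m hm
      simp only [Finset.mem_filter] at hm ⊢
      exact ⟨hm.1, (h m).resolve_left hm.2⟩
    have h3' : 3 ≤ (Finset.univ.filter p2).card := by
      have := Finset.card_le_card hsub
      simp only [Finset.card_univ, Fintype.card_fin] at hsplit
      omega
    obtain ⟨i,j,l,hij,hil,hjl,h1,h2,h3⟩ := ex3 p2 h3'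
    exact ⟨i,j,l,hij,hil,hjl, Or.inr ⟨h1,h2,h3⟩⟩

/-! ### a singular conic is a product of two linear forms -/

lemma singular_factor {K : Type*} [Field K] [IsAlgClosed K] (c : Fin 6 → K) (hc : c ≠ 0)
    (v : Fin 3 → K) (hv : v ≠ 0) (hgrad : ∀ i, gradv c v i = 0) (hQv : ev c v = 0) :
    ∃ w1 w2 : Fin 3 → K, w1 ≠ 0 ∧ w2 ≠ 0 ∧ ∀ x, ev c x = dot3 w1 x * dot3 w2 x := by
  have hbfv : ∀ y : Fin 3 → K, bf c y v = 0 := by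
    intro y; simp [bf, hgrad]
  have hxy : ∀ (sc : K) (x : Fin 3 → K), ev c x = ev c (x - sc • v) := by
    intro sc x
    have hx : ev c x = ev c (sc • v + (1:K) • (x - sc • v)) := by norm_num
    rw [hx, ev_polar, hQv, bf_symm, hbfv]
    ring
  rcases exists_coord_ne v hv with hvj | hvj | hvj
  · have hy0 : ∀ x : Fin 3 → K, (x - (x 0 / v 0) • v) 0 = 0 := by
      intro x; simp; field_simp; ring
    have hbin : ∀ x : Fin 3 → K, ev c x =
        c 1 * (x - (x 0 / v 0) • v) 1 ^ 2 + c 5 * (x - (x 0 / v 0) • v) 1 *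
          (x - (x 0 / v 0) • v) 2 + c 2 * (x - (x 0 / v 0) • v) 2 ^ 2 := by
      intro x
      rw [hxy (x 0 / v 0) x]
      simp only [ev, hy0 x]
      ring
    have hno : ¬(c 1 = 0 ∧ c 5 = 0 ∧ c 2 = 0) := by
      rintro ⟨h1', h5', h2'⟩
      refine hc (ev_zero_coeffs c fun x => ?_)
      rw [hbin x, h1', h5', h2']; ring
    obtain ⟨p, q, r, s, hpq, hrs, hfac⟩ := binfac (c 1) (c 5) (c 2) hno
    refine ⟨![-(p * v 1 + q * v 2) / v 0, p, q], ![-(r * v 1 + s * v 2) / v 0, r, s],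
      fun h0 => hpq ⟨by simpa using congrFun h0 1, by simpa using congrFun h0 2⟩,
      fun h0 => hrs ⟨by simpa using congrFun h0 1, by simpa using congrFun h0 2⟩,
      fun x => ?_⟩
    rw [hbin x, hfac]
    simp only [dot3, Pi.sub_apply, Pi.smul_apply, smul_eq_mul,
      Matrix.cons_val_zero, Matrix.cons_val_one, Matrix.head_cons, Matrix.cons_val_two,
      Matrix.tail_cons]
    field_simp
    ring
  · have hy0 : ∀ x : Fin 3 → K, (x - (x 1 / v 1) • v) 1 = 0 := by
      intro x; simp; field_simp; ring
    have hbin : ∀ x : Fin 3 → K, ev c x =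
        c 0 * (x - (x 1 / v 1) • v) 0 ^ 2 + c 4 * (x - (x 1 / v 1) • v) 0 *
          (x - (x 1 / v 1) • v) 2 + c 2 * (x - (x 1 / v 1) • v) 2 ^ 2 := by
      intro x
      rw [hxy (x 1 / v 1) x]
      simp only [ev, hy0 x]
      ring
    have hno : ¬(c 0 = 0 ∧ c 4 = 0 ∧ c 2 = 0) := by
      rintro ⟨h1', h5', h2'⟩
      refine hc (ev_zero_coeffs c fun x => ?_)
      rw [hbin x, h1', h5', h2']; ring
    obtain ⟨p, q, r, s, hpq, hrs, hfac⟩ := binfac (c 0) (c 4) (c 2) hno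
    refine ⟨![p, -(p * v 0 + q * v 2) / v 1, q], ![r, -(r * v 0 + s * v 2) / v 1, s],
      fun h0 => hpq ⟨by simpa using congrFun h0 0, by simpa using congrFun h0 2⟩,
      fun h0 => hrs ⟨by simpa using congrFun h0 0, by simpa using congrFun h0 2⟩,
      fun x => ?_⟩
    rw [hbin x, hfac]
    simp only [dot3, Pi.sub_apply, Pi.smul_apply, smul_eq_mul,
      Matrix.cons_val_zero, Matrix.cons_val_one, Matrix.head_cons, Matrix.cons_val_two,
      Matrix.tail_cons]
    field_simp
    ring
  · have hy0 : ∀ x : Fin 3 → K, (x - (x 2 / v 2) • v) 2 = 0 := by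
      intro x; simp; field_simp; ring
    have hbin : ∀ x : Fin 3 → K, ev c x =
        c 0 * (x - (x 2 / v 2) • v) 0 ^ 2 + c 3 * (x - (x 2 / v 2) • v) 0 *
          (x - (x 2 / v 2) • v) 1 + c 1 * (x - (x 2 / v 2) • v) 1 ^ 2 := by
      intro x
      rw [hxy (x 2 / v 2) x]
      simp only [ev, hy0 x]
      ring
    have hno : ¬(c 0 = 0 ∧ c 3 = 0 ∧ c 1 = 0) := by
      rintro ⟨h1', h5', h2'⟩
      refine hc (ev_zero_coeffs c fun x => ?_)
      rw [hbin x, h1', h5', h2']; ring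
    obtain ⟨p, q, r, s, hpq, hrs, hfac⟩ := binfac (c 0) (c 3) (c 1) hno
    refine ⟨![p, q, -(p * v 0 + q * v 1) / v 2], ![r, s, -(r * v 0 + s * v 1) / v 2],
      fun h0 => hpq ⟨by simpa using congrFun h0 0, by simpa using congrFun h0 1⟩,
      fun h0 => hrs ⟨by simpa using congrFun h0 0, by simpa using congrFun h0 1⟩,
      fun x => ?_⟩
    rw [hbin x, hfac]
    simp only [dot3, Pi.sub_apply, Pi.smul_apply, smul_eq_mul,
      Matrix.cons_val_zero, Matrix.cons_val_one, Matrix.head_cons, Matrix.cons_val_two,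
      Matrix.tail_cons]
    field_simp
    ring

lemma singular_three_dep {K : Type*} [Field K] [IsAlgClosed K] (c : Fin 6 → K) (hc : c ≠ 0)
    (A : Fin 5 → Fin 3 → K) (hA : ∀ m, ev c (A m) = 0)
    (v : Fin 3 → K) (hv : v ≠ 0) (hgrad : ∀ i, gradv c v i = 0) (hQv : ev c v = 0) :
    ∃ i j l : Fin 5, i ≠ j ∧ i ≠ l ∧ j ≠ l ∧ (Matrix.of ![A i, A j, A l]).det = 0 := by
  obtain ⟨w1, w2, hw1, hw2, hfac⟩ := singular_factor c hc v hv hgrad hQv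
  have h : ∀ m, dot3 w1 (A m) = 0 ∨ dot3 w2 (A m) = 0 := fun m =>
    mul_eq_zero.mp (by rw [← hfac]; exact hA m)
  obtain ⟨i, j, l, hij, hil, hjl, hcase⟩ := pigeon3 h
  refine ⟨i, j, l, hij, hil, hjl, ?_⟩
  rw [← Matrix.exists_mulVec_eq_zero_iff]
  rcases hcase with ⟨h1, h2, h3⟩ | ⟨h1, h2, h3⟩
  · refine ⟨w1, hw1, ?_⟩
    rw [mulVec3]
    funext r
    fin_cases r
    · show dot3 (A i) w1 = 0; rw [dot3_comm]; exact h1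
    · show dot3 (A j) w1 = 0; rw [dot3_comm]; exact h2
    · show dot3 (A l) w1 = 0; rw [dot3_comm]; exact h3
  · refine ⟨w2, hw2, ?_⟩
    rw [mulVec3]
    funext r
    fin_cases r
    · show dot3 (A i) w2 = 0; rw [dot3_comm]; exact h1
    · show dot3 (A j) w2 = 0; rw [dot3_comm]; exact h2
    · show dot3 (A l) w2 = 0; rw [dot3_comm]; exact h3

/-! ### more bridges -/

section Ext2

variable {K : Type*} [Field K] [Algebra k K]

lemma gradv_map (c : Fin 6 → k) (y : Fin 3 → k) (i : Fin 3) :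
    gradv (algebraMap k K ∘ c) (algebraMap k K ∘ y) i = algebraMap k K (gradv c y i) := by
  fin_cases i <;> simp [gradv, map_add, map_mul, map_ofNat]

lemma bf_map (c : Fin 6 → k) (x y : Fin 3 → k) :
    bf (algebraMap k K ∘ c) (algebraMap k K ∘ x) (algebraMap k K ∘ y)
      = algebraMap k K (bf c x y) := by
  simp [bf, gradv_map, map_add, map_mul]

lemma cp_map (u w : Fin 3 → k) :
    cp (algebraMap k K ∘ u) (algebraMap k K ∘ w) = algebraMap k K ∘ cp u w := by
  funext i; fin_cases i <;> simp [cp, map_sub, map_mul]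

lemma vec_map_ne_zero (z : Fin 3 → k) (hz : z ≠ 0) : (algebraMap k K ∘ z) ≠ 0 := by
  intro h
  apply hz
  funext s
  have := congrFun h s
  simp only [Function.comp_apply, Pi.zero_apply] at this ⊢
  exact (algebraMap k K).injective (by rwa [map_zero])

lemma det_map (a b c : Fin 3 → k) :
    (Matrix.of ![(algebraMap k K) ∘ a, algebraMap k K ∘ b, algebraMap k K ∘ c]).det
      = algebraMap k K (Matrix.of ![a, b, c]).det := by
  rw [RingHom.map_det]
  congr 1
  ext r s
  fin_cases r <;> simp [Matrix.map_apply]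

end Ext2

lemma cp_self (u : Fin 3 → k) : cp u u = 0 := by
  funext i; fin_cases i <;> simp [cp] <;> ring

lemma cp_smul_right (d : k) (u w : Fin 3 → k) : cp u (d • w) = d • cp u w := by
  funext i; fin_cases i <;> simp [cp] <;> ring

lemma bf_self (c : Fin 6 → k) (x : Fin 3 → k) : bf c x x = 2 * ev c x := by
  simp [bf, gradv, ev]; ring

/-! ### main forward direction -/

lemma forward (P : Fin 5 → (Fin 3 → k))
    (hgen : ∀ i j l : Fin 5, i ≠ j → i ≠ l → j ≠ l → ¬ Collinear3 (P i) (P j) (P l)) :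
    ∃ Q : MvPolynomial (Fin 3) k, Q.IsHomogeneous 2 ∧ Q ≠ 0 ∧
      (∀ i, MvPolynomial.eval (P i) Q = 0) ∧ SmoothPlaneCurve Q := by
  set Φ : (Fin 6 → k) →ₗ[k] (Fin 5 → k) :=
    { toFun := fun c => fun m => ev c (P m)
      map_add' := by intro a b; funext m; simp [ev]; ring
      map_smul' := by intro r a; funext m; simp [ev, smul_eq_mul]; ring } with hΦ
  have hni : ¬ Function.Injective Φ := by
    intro hinj
    have hle := LinearMap.finrank_le_finrank_of_injective hinj
    rw [Module.finrank_fin_fun, Module.finrank_fin_fun] at hle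
    omega
  obtain ⟨c1, c2, heq, hne⟩ := Function.not_injective_iff.mp hni
  set c : Fin 6 → k := c1 - c2 with hcdef
  have hc : c ≠ 0 := sub_ne_zero.mpr hne
  have hΦc : ∀ m, ev c (P m) = 0 := by
    intro m
    have : Φ c = 0 := by rw [hcdef, map_sub, heq, sub_self]
    have := congrFun this m
    simpa [hΦ] using this
  refine ⟨qpoly c, qpoly_isHomogeneous c, ?_, ?_, ?_⟩
  · intro h
    apply hc
    apply ev_zero_coeffs
    intro x
    rw [← eval_qpoly, h]
    simp
  · intro m
    rw [eval_qpoly]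
    exact hΦc m
  · intro v hv hQv
    by_contra hno
    push_neg at hno
    have φinj : Function.Injective (algebraMap k (AlgebraicClosure k)) :=
      (algebraMap k (AlgebraicClosure k)).injective
    have hc' : ((algebraMap k (AlgebraicClosure k)) ∘ c) ≠ 0 := by
      intro h
      apply hc
      funext i0
      have h2 := congrFun h i0
      simp only [Function.comp_apply, Pi.zero_apply] at h2 ⊢
      exact φinj (by rwa [map_zero])
    have hgrad : ∀ i0 : Fin 3, gradv ((algebraMap k (AlgebraicClosure k)) ∘ c) v i0 = 0 := by
      intro i0
      rw [← aeval_pderiv_qpoly]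
      exact hno i0
    have hQv' : ev ((algebraMap k (AlgebraicClosure k)) ∘ c) v = 0 := by
      rw [← aeval_qpoly]; exact hQv
    have hA : ∀ m, ev ((algebraMap k (AlgebraicClosure k)) ∘ c)
        ((algebraMap k (AlgebraicClosure k)) ∘ P m) = 0 := by
      intro m
      rw [ev_map, hΦc m, map_zero]
    obtain ⟨i, j, l, hij, hil, hjl, hdet⟩ :=
      singular_three_dep _ hc' (fun m => (algebraMap k (AlgebraicClosure k)) ∘ P m)
        hA v hv hgrad hQv'
    apply hgen i j l hij hil hjl
    rw [collinear3_iff_det]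
    rw [det_map] at hdet
    exact φinj (by rwa [map_zero])

/-! ### main backward direction -/

lemma backward (P : Fin 5 → (Fin 3 → k))
    (h0 : ∀ i, P i ≠ 0)
    (hdist : ∀ i j, i ≠ j → ∀ c : k, c • P i ≠ P j)
    (Q : MvPolynomial (Fin 3) k) (hhom : Q.IsHomogeneous 2) (hQne : Q ≠ 0)
    (hvan : ∀ i, MvPolynomial.eval (P i) Q = 0) (hsm : SmoothPlaneCurve Q) :
    ∀ i j l : Fin 5, i ≠ j → i ≠ l → j ≠ l → ¬ Collinear3 (P i) (P j) (P l) := by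
  intro i j l hij hil hjl hcol
  obtain ⟨c, rfl⟩ := isHomogeneous_two_repr hhom
  have hc : c ≠ 0 := by
    intro h
    apply hQne
    rw [h]
    show qpoly (0 : Fin 6 → k) = 0
    rw [qpoly]
    simp
  have hev : ∀ m, ev c (P m) = 0 := fun m => by rw [← eval_qpoly]; exact hvan m
  -- get a dependence relation
  rw [collinear3_iff_det, ← Matrix.exists_vecMul_eq_zero_iff] at hcol
  obtain ⟨g, hg, hvm⟩ := hcol
  have hcomb : ∀ s : Fin 3, g 0 * P i s + g 1 * P j s + g 2 * P l s = 0 := by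
    intro s
    have := congrFun hvm s
    simpa [Matrix.vecMul, dotProduct, Fin.sum_univ_three] using this
  have hg2 : g 2 ≠ 0 := by
    intro hg2
    rcases eq_or_ne (g 0) 0 with hg0 | hg0
    · have hg1 : g 1 ≠ 0 := by
        rcases exists_coord_ne g hg with h | h | h
        · exact absurd hg0 h
        · exact h
        · exact absurd hg2 h
      apply h0 j
      funext s
      have := hcomb s
      rw [hg0, hg2] at this
      simp only [Pi.zero_apply]
      simp only [zero_mul, zero_add, add_zero] at this
      exact (mul_eq_zero.mp this).resolve_left hg1
    · apply hdist j i hij.symm (-(g 1) / g 0)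
      funext s
      have := hcomb s
      rw [hg2] at this
      simp only [Pi.smul_apply, smul_eq_mul]
      field_simp
      linear_combination -this
  set st : k := -(g 0) / g 2 with hst
  set tt : k := -(g 1) / g 2 with htt
  have hPl : P l = st • P i + tt • P j := by
    funext s
    have hs := hcomb s
    simp only [Pi.add_apply, Pi.smul_apply, smul_eq_mul, hst, htt]
    rw [div_mul_eq_mul_div, div_mul_eq_mul_div, ← add_div, eq_div_iff hg2]
    linear_combination hs
  have hstne : st ≠ 0 := by
    intro h
    apply hdist j l hjl tt
    rw [hPl, h]
    simp
  have httne : tt ≠ 0 := by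
    intro h
    apply hdist i l hil st
    rw [hPl, h]
    simp
  have hbf : bf c (P i) (P j) = 0 := by
    have h1 : ev c (P l) = 0 := hev l
    rw [hPl, ev_polar, hev i, hev j] at h1
    simp only [mul_zero, zero_mul, zero_add, add_zero] at h1
    rcases mul_eq_zero.mp h1 with h' | h'
    · rcases mul_eq_zero.mp h' with h'' | h''
      · exact absurd h'' hstne
      · exact absurd h'' httne
    · exact h'
  -- move to the algebraic closure
  have φinj := (algebraMap k (AlgebraicClosure k)).injective
  set c' : Fin 6 → AlgebraicClosure k := (algebraMap k (AlgebraicClosure k)) ∘ c with hc'd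
  set a : Fin 3 → AlgebraicClosure k := (algebraMap k (AlgebraicClosure k)) ∘ (P i) with hadef
  set b : Fin 3 → AlgebraicClosure k := (algebraMap k (AlgebraicClosure k)) ∘ (P j) with hbdef
  have heva : ev c' a = 0 := by rw [hc'd, hadef, ev_map, hev i, map_zero]
  have hevb : ev c' b = 0 := by rw [hc'd, hbdef, ev_map, hev j, map_zero]
  have hbf' : bf c' a b = 0 := by rw [hc'd, hadef, hbdef, bf_map, hbf, map_zero]
  have hane : a ≠ 0 := vec_map_ne_zero _ (h0 i)
  have hbne : b ≠ 0 := vec_map_ne_zero _ (h0 j)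
  have hcpk : cp (P i) (P j) ≠ 0 := by
    intro h
    obtain ⟨d, hd⟩ := cp_parallel _ _ (h0 i) h
    exact hdist i j hij d hd.symm
  have hn : cp a b ≠ 0 := by
    rw [hadef, hbdef, cp_map]
    exact vec_map_ne_zero _ hcpk
  have hTa : ∃ lam : AlgebraicClosure k, gradv c' a = lam • cp a b := by
    apply cp_parallel _ _ hn
    rw [cp_cp]
    have h1 : dot3 a (gradv c' a) = 0 := by
      rw [show dot3 a (gradv c' a) = bf c' a a from rfl, bf_self, heva, mul_zero]
    have h2 : dot3 b (gradv c' a) = 0 := by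
      rw [show dot3 b (gradv c' a) = bf c' b a from rfl, bf_symm, hbf']
    rw [h1, h2]
    simp
  have hTb : ∃ mu : AlgebraicClosure k, gradv c' b = mu • cp a b := by
    apply cp_parallel _ _ hn
    rw [cp_cp]
    have h1 : dot3 a (gradv c' b) = 0 := by
      rw [show dot3 a (gradv c' b) = bf c' a b from rfl, hbf']
    have h2 : dot3 b (gradv c' b) = 0 := by
      rw [show dot3 b (gradv c' b) = bf c' b b from rfl, bf_self, hevb, mul_zero]
    rw [h1, h2]
    simp
  obtain ⟨lam, hlam⟩ := hTa
  obtain ⟨mu, hmu⟩ := hTb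
  have main : ∀ v : Fin 3 → AlgebraicClosure k, v ≠ 0 → ev c' v = 0 →
      (∀ i0, gradv c' v i0 = 0) → False := by
    intro v hv hev0 hgr
    obtain ⟨i0, hi0⟩ := hsm v hv (by rw [aeval_qpoly]; exact hev0)
    exact hi0 (by rw [aeval_pderiv_qpoly]; exact hgr i0)
  by_cases hl0 : lam = 0
  · refine main a hane heva fun i0 => ?_
    rw [hlam, hl0, zero_smul]
    rfl
  by_cases hm0 : mu = 0
  · refine main b hbne hevb fun i0 => ?_
    rw [hmu, hm0, zero_smul]
    rfl
  · have hvne : mu • a - lam • b ≠ 0 := by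
      intro h
      apply hn
      have hmula : mu • a = lam • b := sub_eq_zero.mp h
      have hb2 : b = (mu / lam) • a := by
        funext s
        have hs := congrFun hmula s
        simp only [Pi.smul_apply, smul_eq_mul] at hs ⊢
        field_simp
        linear_combination -hs
      rw [hb2, cp_smul_right, cp_self, smul_zero]
    have hv2 : mu • a - lam • b = mu • a + (-lam) • b := by rw [neg_smul, ← sub_eq_add_neg]
    have hgr : ∀ i0, gradv c' (mu • a - lam • b) i0 = 0 := by
      intro i0
      rw [hv2, gradv_comb, hlam, hmu]
      simp only [Pi.add_apply, Pi.smul_apply, smul_eq_mul]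
      ring
    have hev0 : ev c' (mu • a - lam • b) = 0 := by
      rw [hv2, ev_polar, heva, hevb, hbf']
      ring
    exact main _ hvne hev0 hgr

end FivePts

/-- Five distinct points in the projective plane over a field lie in general position
(no three collinear) if and only if they lie on a smooth conic. -/
theorem five_points_general_position_iff_on_smooth_conic
    {k : Type*} [Field k] (P : Fin 5 → (Fin 3 → k))
    (h0 : ∀ i, P i ≠ 0)
    (hdist : ∀ i j, i ≠ j → ∀ c : k, c • P i ≠ P j) :
    (∀ i j l : Fin 5, i ≠ j → i ≠ l → j ≠ l → ¬ Collinear3 (P i) (P j) (P l)) ↔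
      ∃ Q : MvPolynomial (Fin 3) k, Q.IsHomogeneous 2 ∧ Q ≠ 0 ∧
        (∀ i, MvPolynomial.eval (P i) Q = 0) ∧ SmoothPlaneCurve Q := by
  constructor
  · exact fun hgen => FivePts.forward P hgen
  · rintro ⟨Q, hhom, hQne, hvan, hsm⟩
    exact FivePts.backward P h0 hdist Q hhom hQne hvan hsm
end

section
/- Let q ≥ 4 and let P_1,...,P_5 ∈ ℙ²(𝔽_q) be five points in general position, C the smooth conic through them, and 𝔏 the union of the ten lines through pairs of these points. Then the union 𝔠 = C ∪ 𝔏 has exactly 11q − 24 rational points over 𝔽_q. -/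
set_option linter.unusedSectionVars false
set_option linter.unusedVariables false
set_option maxHeartbeats 1000000

/-- The set of rational points of `ℙ²` lying on one of the lines through two of the
given points: a point lies on the line through `P i` and `P j` iff the determinant of
the matrix with rows `p.rep, P i, P j` vanishes. -/
def linesThrough {F : Type*} [Field F] {n : ℕ} (P : Fin n → (Fin 3 → F)) :
    Set (Projectivization F (Fin 3 → F)) :=
  {p | ∃ i j, i ≠ j ∧ (Matrix.of ![p.rep, P i, P j]).det = 0}

/-- The set of rational points of `ℙ²` lying on the conic `Q = 0`. -/
def conicPoints {F : Type*} [Field F] (Q : MvPolynomial (Fin 3) F) :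
    Set (Projectivization F (Fin 3 → F)) :=
  {p | MvPolynomial.eval p.rep Q = 0}

/-- whether two index pairs share an index -/
def Shares (z w : Fin 5 × Fin 5) : Prop :=
  z.1 = w.1 ∨ z.1 = w.2 ∨ z.2 = w.1 ∨ z.2 = w.2

instance : DecidablePred (fun zw : (Fin 5 × Fin 5) × (Fin 5 × Fin 5) => Shares zw.1 zw.2) :=
  fun _ => by unfold Shares; infer_instance

open MvPolynomial

namespace CP
variable {K : Type*} [Field K]

/-- dot product on `Fin 3 → K`. -/
def dotv (x y : Fin 3 → K) : K := x 0 * y 0 + x 1 * y 1 + x 2 * y 2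

/-- cross product on `Fin 3 → K`. -/
def cp (x y : Fin 3 → K) : Fin 3 → K :=
  ![x 1 * y 2 - x 2 * y 1, x 2 * y 0 - x 0 * y 2, x 0 * y 1 - x 1 * y 0]

lemma det3_eq (x y z : Fin 3 → K) : (Matrix.of ![x, y, z]).det = dotv x (cp y z) := by
  simp [Matrix.det_fin_three, dotv, cp]; ring

lemma dotv_comm (x y : Fin 3 → K) : dotv x y = dotv y x := by simp [dotv]; ring

lemma dotv_cyclic (x y z : Fin 3 → K) : dotv x (cp y z) = dotv z (cp x y) := by
  simp [dotv, cp]; ring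

lemma dotv_cp_self_left (y z : Fin 3 → K) : dotv y (cp y z) = 0 := by
  simp [dotv, cp]; ring

lemma dotv_cp_self_right (y z : Fin 3 → K) : dotv z (cp y z) = 0 := by
  simp [dotv, cp]; ring

lemma dotv_add_smul_left (s t : K) (u v w : Fin 3 → K) :
    dotv (s • u + t • v) w = s * dotv u w + t * dotv v w := by
  simp [dotv]; ring

lemma dotv_smul_left (s : K) (u w : Fin 3 → K) : dotv (s • u) w = s * dotv u w := by
  simp [dotv]; ring

lemma dotv_add_left (u v w : Fin 3 → K) : dotv (u + v) w = dotv u w + dotv v w := by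
  simp [dotv]; ring

lemma dotv_smul_sub_left (s t : K) (u v w : Fin 3 → K) :
    dotv (s • u - t • v) w = s * dotv u w - t * dotv v w := by
  simp [dotv]; ring

lemma dotv_sub_smul_left (s : K) (u v w : Fin 3 → K) :
    dotv (u - s • v) w = dotv u w - s * dotv v w := by
  simp [dotv]; ring

lemma dotv_single (i : Fin 3) (g : Fin 3 → K) : dotv (Pi.single i 1) g = g i := by
  fin_cases i <;> simp [dotv, Pi.single_apply]

lemma cp_smul_self (c : K) (x : Fin 3 → K) : cp x (c • x) = 0 := by
  funext i; fin_cases i <;> simp [cp] <;> ring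

lemma cp_smul_self' (c : K) (x : Fin 3 → K) : cp (c • x) x = 0 := by
  funext i; fin_cases i <;> simp [cp] <;> ring

lemma cp_anti (x y : Fin 3 → K) : cp y x = -cp x y := by
  funext i; fin_cases i <;> simp [cp] <;> ring

/-- Cramer's rule identity. -/
lemma cramer (a b c v : Fin 3 → K) :
    dotv a (cp b c) • v
      = dotv v (cp b c) • a + dotv a (cp v c) • b + dotv a (cp b v) • c := by
  funext i; fin_cases i <;> simp [dotv, cp] <;> ring

/-- vector triple product. -/
lemma triple (e w g : Fin 3 → K) :
    cp (cp e w) g = (dotv g e) • w - (dotv g w) • e := by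
  funext i; fin_cases i <;> simp [dotv, cp] <;> ring

/-- vanishing cross product means proportional. -/
lemma cp_eq_zero (x y : Fin 3 → K) (h : cp x y = 0) (hx : x ≠ 0) : ∃ c : K, y = c • x := by
  have h0 := congrFun h 0
  have h1 := congrFun h 1
  have h2 := congrFun h 2
  simp [cp] at h0 h1 h2
  have hex : ∃ k, x k ≠ 0 := by
    by_contra hc; push_neg at hc; exact hx (funext fun k => hc k)
  obtain ⟨k, hk⟩ := hex
  refine ⟨y k / x k, funext fun j => ?_⟩
  have : ∀ j, y j * x k = y k * x j := by
    intro j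
    fin_cases j <;> fin_cases k <;>
      simp only [Fin.zero_eta, Fin.mk_one, Fin.reduceFinMk, Fin.isValue] <;>
      first
        | ring1
        | linear_combination h0
        | linear_combination -h0
        | linear_combination h1
        | linear_combination -h1
        | linear_combination h2
        | linear_combination -h2
  have hj := this j
  rw [Pi.smul_apply, smul_eq_mul, div_mul_eq_mul_div, eq_div_iff hk]
  linear_combination hj

/-- normal vector spans the perp of a plane. -/
lemma perp_span (e w g : Fin 3 → K) (hew : cp e w ≠ 0)
    (he : dotv e g = 0) (hw : dotv w g = 0) : ∃ c : K, g = c • cp e w := by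
  apply cp_eq_zero _ _ _ hew
  rw [triple, dotv_comm g e, he, dotv_comm g w, hw]
  simp


theorem taylor_mon (s : Fin 3 →₀ ℕ) (hs : s 0 + s 1 + s 2 = 2) (a : K)
    (x y : Fin 3 → K) (c : K) :
    eval (x + c • y) (monomial s a) =
      eval x (monomial s a)
      + c * (∑ i, y i * eval x (pderiv i (monomial s a)))
      + c^2 * eval y (monomial s a) := by
  simp only [eval_monomial, pderiv_monomial, Finsupp.prod_fintype _ _ (fun i => pow_zero _),
    Fin.prod_univ_three, Fin.sum_univ_three, Pi.add_apply, Pi.smul_apply, smul_eq_mul,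
    Finsupp.sub_apply, Finsupp.single_apply]
  norm_num
  have h0 : s 0 ≤ 2 := by omega
  have h1 : s 1 ≤ 2 := by omega
  have h2 : s 2 ≤ 2 := by omega
  interval_cases h : s 0 <;> interval_cases h' : s 1 <;> interval_cases h'' : s 2 <;>
    simp_all <;> ring

theorem taylor2 {Q : MvPolynomial (Fin 3) K} (hQ : Q.IsHomogeneous 2)
    (x y : Fin 3 → K) (c : K) :
    eval (x + c • y) Q =
      eval x Q + c * (∑ i, y i * eval x (pderiv i Q)) + c^2 * eval y Q := by
  have hdeg : ∀ s ∈ Q.support, s 0 + s 1 + s 2 = 2 := by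
    intro s hs
    have : (Finsupp.weight fun _ => (1:ℕ)) s = 2 := hQ (MvPolynomial.mem_support_iff.mp hs)
    simp [Finsupp.weight_apply, Finsupp.sum_fintype, Fin.sum_univ_three] at this
    omega
  have hpd : ∀ i, eval x (pderiv i Q)
      = ∑ s ∈ Q.support, eval x (pderiv i (monomial s (coeff s Q))) := by
    intro i
    conv_lhs => rw [← Q.support_sum_monomial_coeff]
    rw [map_sum, map_sum]
  conv_lhs => rw [← Q.support_sum_monomial_coeff]
  rw [map_sum, Finset.sum_congr rfl fun s hs => taylor_mon s (hdeg s hs) (coeff s Q) x y c,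
    Finset.sum_add_distrib, Finset.sum_add_distrib]
  have e1 : ∑ s ∈ Q.support, eval x (monomial s (coeff s Q)) = eval x Q := by
    conv_rhs => rw [← Q.support_sum_monomial_coeff]
    rw [map_sum]
  have e3 : ∑ s ∈ Q.support, c^2 * eval y (monomial s (coeff s Q)) = c^2 * eval y Q := by
    conv_rhs => rw [← Q.support_sum_monomial_coeff]
    rw [map_sum, Finset.mul_sum]
  have e2 : ∑ s ∈ Q.support, (c * ∑ i, y i * eval x (pderiv i (monomial s (coeff s Q))))
      = c * ∑ i, y i * eval x (pderiv i Q) := by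
    simp only [hpd, Finset.mul_sum]
    rw [Finset.sum_comm]
  rw [e1, e2, e3]

/-- gradient vector of `Q` at `x` -/
noncomputable def gradv (Q : MvPolynomial (Fin 3) K) (x : Fin 3 → K) : Fin 3 → K :=
  fun i => eval x (pderiv i Q)

/-- polar form of `Q` -/
noncomputable def Bv (Q : MvPolynomial (Fin 3) K) (x y : Fin 3 → K) : K := dotv y (gradv Q x)

variable {Q : MvPolynomial (Fin 3) K} (hQ : Q.IsHomogeneous 2)
include hQ

theorem taylor (x y : Fin 3 → K) (c : K) :
    eval (x + c • y) Q = eval x Q + c * Bv Q x y + c ^ 2 * eval y Q := by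
  rw [taylor2 hQ]
  simp [Bv, dotv, gradv, Fin.sum_univ_three]

theorem Bv_symm (x y : Fin 3 → K) : Bv Q x y = Bv Q y x := by
  have h1 := taylor hQ x y 1
  have h2 := taylor hQ y x 1
  rw [one_smul] at h1 h2
  rw [add_comm y x] at h2
  linear_combination h2 - h1

theorem eval_zero_v : eval (0 : Fin 3 → K) Q = 0 := by
  rw [eval_zero, constantCoeff_eq]
  apply hQ.coeff_eq_zero
  simp [Finsupp.degree]

theorem eval_smul_v (c : K) (x : Fin 3 → K) : eval (c • x) Q = c ^ 2 * eval x Q := by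
  have h := taylor hQ 0 x c
  rw [zero_add, eval_zero_v hQ] at h
  have hB : Bv Q 0 x = 0 := by
    rw [Bv_symm hQ]
    simp [Bv, dotv]
  rw [h, hB]; ring

theorem euler_v (x : Fin 3 → K) : Bv Q x x = 2 * eval x Q := by
  have h := taylor hQ x x 1
  rw [one_smul, ← two_smul K x, eval_smul_v hQ] at h
  linear_combination -h

theorem Bv_add_smul_right (s t : K) (x y z : Fin 3 → K) :
    Bv Q x (s • y + t • z) = s * Bv Q x y + t * Bv Q x z := by
  simp [Bv, dotv_add_smul_left]

theorem Bv_smul_left (s : K) (x y : Fin 3 → K) : Bv Q (s • x) y = s * Bv Q x y := by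
  rw [Bv_symm hQ, Bv, dotv_smul_left, ← Bv, Bv_symm hQ]

theorem Bv_add_smul_left (s t : K) (x y z : Fin 3 → K) :
    Bv Q (s • x + t • y) z = s * Bv Q x z + t * Bv Q y z := by
  rw [Bv_symm hQ, Bv_add_smul_right hQ, Bv_symm hQ z x, Bv_symm hQ z y]

theorem eval_combo (s t : K) (x y : Fin 3 → K) :
    eval (s • x + t • y) Q
      = s ^ 2 * eval x Q + s * t * Bv Q x y + t ^ 2 * eval y Q := by
  rw [taylor hQ, eval_smul_v hQ, Bv_smul_left hQ]; ring

theorem gradv_eq (x : Fin 3 → K) (i : Fin 3) : gradv Q x i = Bv Q x (Pi.single i 1) := by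
  rw [Bv, dotv_single]

theorem gradv_combo (s t : K) (x y : Fin 3 → K) (i : Fin 3) :
    gradv Q (s • x + t • y) i = s * gradv Q x i + t * gradv Q y i := by
  rw [gradv_eq hQ, Bv_add_smul_left hQ, ← gradv_eq hQ, ← gradv_eq hQ]

end CP

namespace CP

theorem eval_basechange {K L : Type*} [Field K] [Field L] [Algebra K L]
    (Q : MvPolynomial (Fin 3) K) (x : Fin 3 → K) :
    eval (fun i => algebraMap K L (x i)) (map (algebraMap K L) Q)
      = algebraMap K L (eval x Q) := by
  rw [eval_map]
  have h := eval₂_comp_left (algebraMap K L) (RingHom.id K) x Q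
  simp only [eval₂_id, RingHomCompTriple.comp_eq, RingHom.id_comp] at h
  exact (h.symm.trans (by rfl))

theorem gradv_basechange {K L : Type*} [Field K] [Field L] [Algebra K L]
    (Q : MvPolynomial (Fin 3) K) (x : Fin 3 → K) (i : Fin 3) :
    gradv (map (algebraMap K L) Q) (fun j => algebraMap K L (x j)) i
      = algebraMap K L (gradv Q x i) := by
  rw [gradv, pderiv_map, eval_basechange, gradv]

theorem Bv_basechange {K L : Type*} [Field K] [Field L] [Algebra K L]
    (Q : MvPolynomial (Fin 3) K) (x y : Fin 3 → K) :
    Bv (map (algebraMap K L) Q) (fun j => algebraMap K L (x j)) (fun j => algebraMap K L (y j))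
      = algebraMap K L (Bv Q x y) := by
  simp [Bv, dotv, gradv_basechange]

theorem cp_basechange {K L : Type*} [Field K] [Field L] [Algebra K L]
    (x y : Fin 3 → K) (i : Fin 3) :
    cp (fun j => algebraMap K L (x j)) (fun j => algebraMap K L (y j)) i
      = algebraMap K L (cp x y i) := by
  fin_cases i <;> simp [cp]

variable {F : Type*} [Field F] {Q : MvPolynomial (Fin 3) F}

/-- the gradient of a smooth conic is nonzero at any rational point. -/
theorem grad_ne_zero (hQs : SmoothPlaneCurve Q) {x : Fin 3 → F} (hx : x ≠ 0)
    (hqx : eval x Q = 0) : ∃ i, gradv Q x i ≠ 0 := by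
  set L := AlgebraicClosure F
  have hinj : Function.Injective (algebraMap F L) := (algebraMap F L).injective
  set x' : Fin 3 → L := fun i => algebraMap F L (x i) with hx'def
  have hx' : x' ≠ 0 := by
    intro h
    apply hx
    funext i
    have h2 : algebraMap F L (x i) = algebraMap F L 0 := by
      rw [map_zero]; exact congrFun h i
    exact hinj h2
  have haev : aeval x' Q = 0 := by
    rw [aeval_def, eval₂_eq_eval_map, eval_basechange, hqx, map_zero]
  obtain ⟨i, hi⟩ := hQs x' hx' haev
  refine ⟨i, fun h => hi ?_⟩
  rw [aeval_def, eval₂_eq_eval_map]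
  have : eval x' (map (algebraMap F L) (pderiv i Q)) = algebraMap F L (gradv Q x i) := by
    rw [← gradv_basechange, gradv, pderiv_map]
  rw [this, h, map_zero]

/-- a smooth conic contains no line: two distinct conic points are never conjugate. -/
theorem no_line (hQ2 : Q.IsHomogeneous 2) (hQs : SmoothPlaneCurve Q)
    {x y : Fin 3 → F} (hx : x ≠ 0) (hxy : ∀ c : F, y ≠ c • x)
    (hqx : eval x Q = 0) (hqy : eval y Q = 0) (hB : Bv Q x y = 0) : False := by
  set L := AlgebraicClosure F with hL
  have hinj : Function.Injective (algebraMap F L) := (algebraMap F L).injective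
  set Q' : MvPolynomial (Fin 3) L := map (algebraMap F L) Q with hQ'def
  have hQ2' : Q'.IsHomogeneous 2 := hQ2.map _
  set x' : Fin 3 → L := fun i => algebraMap F L (x i) with hx'def
  set y' : Fin 3 → L := fun i => algebraMap F L (y i) with hy'def
  -- singularity criterion
  have hsing : ∀ p : Fin 3 → L, p ≠ 0 → eval p Q' = 0 →
      (∀ i, gradv Q' p i = 0) → False := by
    intro p hp hqp hgp
    have haev : aeval p Q = 0 := by rw [aeval_def, eval₂_eq_eval_map, ← hQ'def, hqp]
    obtain ⟨i, hi⟩ := hQs p hp haev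
    apply hi
    rw [aeval_def, eval₂_eq_eval_map]
    have : eval p (map (algebraMap F L) (pderiv i Q)) = gradv Q' p i := by
      rw [hQ'def, gradv, pderiv_map]
    rw [this, hgp i]
  have hx'0 : x' ≠ 0 := by
    intro h; apply hx; funext i
    have h2 : algebraMap F L (x i) = algebraMap F L 0 := by
      rw [map_zero]; exact congrFun h i
    exact hinj h2
  -- basic vanishing facts
  have hqx' : eval x' Q' = 0 := by rw [hQ'def, hx'def, eval_basechange, hqx, map_zero]
  have hqy' : eval y' Q' = 0 := by rw [hQ'def, hy'def, eval_basechange, hqy, map_zero]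
  have hBxy : Bv Q' x' y' = 0 := by rw [hQ'def, hx'def, hy'def, Bv_basechange, hB, map_zero]
  set α : Fin 3 → L := gradv Q' x' with hαdef
  set β : Fin 3 → L := gradv Q' y' with hβdef
  have hxα : dotv x' α = 0 := by
    have : Bv Q' x' x' = 2 * eval x' Q' := euler_v hQ2' x'
    rw [hqx', mul_zero] at this
    rw [← this, Bv]
  have hyα : dotv y' α = 0 := hBxy
  have hxβ : dotv x' β = 0 := by
    have : Bv Q' y' x' = Bv Q' x' y' := Bv_symm hQ2' y' x'
    rw [hBxy] at this
    rw [← this, Bv]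
  have hyβ : dotv y' β = 0 := by
    have : Bv Q' y' y' = 2 * eval y' Q' := euler_v hQ2' y'
    rw [hqy', mul_zero] at this
    rw [← this, Bv]
  -- x', y' are not proportional : their cross product is nonzero
  have hcpF : cp x y ≠ 0 := by
    intro h
    obtain ⟨c, hc⟩ := cp_eq_zero x y h hx
    exact hxy c hc
  have hcp : cp x' y' ≠ 0 := by
    intro h
    apply hcpF
    funext i
    apply hinj
    rw [← cp_basechange (L := L) x y i]
    have := congrFun h i
    simpa using this
  -- case analysis on α
  by_cases hα0 : α = 0
  · exact hsing x' hx'0 hqx' (fun i => by rw [← hαdef, hα0]; rfl)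
  · -- pick j with α j ≠ 0
    have : ∃ j, α j ≠ 0 := by
      by_contra hc; push_neg at hc; exact hα0 (funext hc)
    obtain ⟨j, hj⟩ := this
    set δ : Fin 3 → L := Pi.single j 1 with hδdef
    by_cases hd : dotv δ (cp x' y') = 0
    · -- δ j lies in the plane spanned by x',y' : contradiction with α j ≠ 0
      obtain ⟨k, hk⟩ : ∃ k, cp x' y' k ≠ 0 := by
        by_contra hc; push_neg at hc; exact hcp (funext hc)
      set δk : Fin 3 → L := Pi.single k 1 with hδkdef
      have hD : dotv x' (cp y' δk) ≠ 0 := by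
        rw [dotv_cyclic]
        rwa [dotv_single]
      -- Cramer: write δ in terms of x', y', δk
      have hcr := cramer x' y' δk δ
      have hco : dotv x' (cp y' δ) = 0 := by
        rw [dotv_cyclic]
        exact hd
      rw [hco, zero_smul, add_zero] at hcr
      -- dot with α
      have h1 : dotv (dotv x' (cp y' δk) • δ) α = dotv x' (cp y' δk) * α j := by
        rw [dotv_smul_left, hδdef, dotv_single]
      have h2 : dotv (dotv δ (cp y' δk) • x' + dotv x' (cp δ δk) • y') α = 0 := by
        rw [dotv_add_smul_left, hxα, hyα]; ring
      rw [hcr, h2] at h1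
      exact hj (by
        rcases mul_eq_zero.mp h1.symm with h | h
        · exact absurd h hD
        · exact h)
    · -- the singular point is β j • x' - α j • y'
      set γ : Fin 3 → L := fun i => β j * α i - α j * β i with hγdef
      have hδα : dotv δ α = α j := by rw [hδdef, dotv_single]
      have hδβ : dotv δ β = β j := by rw [hδdef, dotv_single]
      have hγ0 : ∀ i, γ i = 0 := by
        have hvγ : ∀ v : Fin 3 → L, dotv v γ = 0 := by
          intro v
          have hdg : ∀ w : Fin 3 → L, dotv w γ
              = β j * dotv w α - α j * dotv w β := by
            intro w
            simp [hγdef, dotv]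
            ring
          have hδγ : dotv δ γ = 0 := by rw [hdg, hδα, hδβ]; ring
          have hxγ : dotv x' γ = 0 := by rw [hdg, hxα, hxβ]; ring
          have hyγ : dotv y' γ = 0 := by rw [hdg, hyα, hyβ]; ring
          have hcr := cramer δ x' y' v
          have h1 : dotv (dotv δ (cp x' y') • v) γ = dotv δ (cp x' y') * dotv v γ := by
            rw [dotv_smul_left]
          have h2 : dotv (dotv v (cp x' y') • δ + (dotv δ (cp v y') • x' + dotv δ (cp x' v) • y')) γ
              = 0 := by
            rw [dotv_add_left, dotv_add_left, dotv_smul_left, dotv_smul_left, dotv_smul_left,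
              hδγ, hxγ, hyγ]; ring
          rw [hcr, add_assoc, h2] at h1
          rcases mul_eq_zero.mp h1.symm with h | h
          · exact absurd h hd
          · exact h
        intro i
        have := hvγ (Pi.single i 1)
        rwa [dotv_single] at this
      set p : Fin 3 → L := β j • x' + (-α j) • y' with hpdef
      have hp0 : p ≠ 0 := by
        intro h
        have hyx : y' = (β j / α j) • x' := by
          funext i
          have := congrFun h i
          simp only [hpdef, Pi.add_apply, Pi.smul_apply, smul_eq_mul, Pi.zero_apply] at this
          simp only [Pi.smul_apply, smul_eq_mul]
          rw [div_mul_eq_mul_div, eq_div_iff hj]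
          linear_combination -this
        apply hcp
        rw [hyx]
        exact cp_smul_self _ _
      have hqp : eval p Q' = 0 := by
        rw [hpdef, eval_combo hQ2', hqx', hqy']
        have : Bv Q' x' y' = 0 := hBxy
        rw [this]; ring
      have hgp : ∀ i, gradv Q' p i = 0 := by
        intro i
        rw [hpdef, gradv_combo hQ2']
        have := hγ0 i
        rw [hγdef] at this
        simp only [← hαdef, ← hβdef]
        linear_combination this
      exact hsing p hp0 hqp hgp

end CP

namespace CP

variable {F : Type*} [Field F]

open Projectivization

/-- the line through `a` and `b` as a set of projective points -/
def lineSet (a b : Fin 3 → F) : Set (Projectivization F (Fin 3 → F)) :=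
  {p | (Matrix.of ![p.rep, a, b]).det = 0}

lemma mem_lineSet_iff (a b : Fin 3 → F) (p : Projectivization F (Fin 3 → F)) :
    p ∈ lineSet a b ↔ dotv p.rep (cp a b) = 0 := by
  rw [lineSet, Set.mem_setOf_eq, det3_eq]

lemma dotv_rep_mk (v : Fin 3 → F) (hv : v ≠ 0) (n : Fin 3 → F) (h : dotv v n = 0) :
    dotv (Projectivization.mk F v hv).rep n = 0 := by
  obtain ⟨c, hc⟩ := exists_smul_eq_mk_rep F v hv
  rw [← hc, Units.smul_def, dotv_smul_left, h, mul_zero]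

lemma dotv_mk_rep_eq_zero (v : Fin 3 → F) (hv : v ≠ 0) (n : Fin 3 → F)
    (h : dotv (Projectivization.mk F v hv).rep n = 0) : dotv v n = 0 := by
  obtain ⟨c, hc⟩ := exists_smul_eq_mk_rep F v hv
  rw [← hc, Units.smul_def, dotv_smul_left, mul_eq_zero] at h
  rcases h with h | h
  · exact absurd h c.ne_zero
  · exact h

lemma mem_lineSet_mk (a b v : Fin 3 → F) (hv : v ≠ 0) :
    Projectivization.mk F v hv ∈ lineSet a b ↔ dotv v (cp a b) = 0 := by
  rw [mem_lineSet_iff]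
  exact ⟨dotv_mk_rep_eq_zero v hv _, dotv_rep_mk v hv _⟩

/-- membership of the span of two independent vectors, via Cramer -/
lemma mem_span_pair {a b : Fin 3 → F} (hab : cp a b ≠ 0) {v : Fin 3 → F}
    (h : dotv v (cp a b) = 0) : ∃ s t : F, v = s • a + t • b := by
  obtain ⟨k, hk⟩ : ∃ k, cp a b k ≠ 0 := by
    by_contra hc; push_neg at hc; exact hab (funext hc)
  set δk : Fin 3 → F := Pi.single k 1 with hδk
  have hD : dotv a (cp b δk) ≠ 0 := by
    rw [dotv_cyclic, hδk, dotv_single]; exact hk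
  have hcr := cramer a b δk v
  have hco : dotv a (cp b v) = 0 := by rw [dotv_cyclic]; exact h
  rw [hco, zero_smul, add_zero] at hcr
  refine ⟨dotv v (cp b δk) / dotv a (cp b δk), dotv a (cp v δk) / dotv a (cp b δk), ?_⟩
  funext i
  have h1 := congrFun hcr i
  simp only [Pi.smul_apply, smul_eq_mul, Pi.add_apply] at h1 ⊢
  field_simp
  linear_combination h1

/-- coefficients of a vanishing combination of independent vectors vanish -/
lemma indep_coeffs {a b : Fin 3 → F} (hab : cp a b ≠ 0) {s t : F}
    (h : s • a + t • b = 0) : s = 0 ∧ t = 0 := by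
  obtain ⟨k, hk⟩ : ∃ k, cp a b k ≠ 0 := by
    by_contra hc; push_neg at hc; exact hab (funext hc)
  set δk : Fin 3 → F := Pi.single k 1 with hδk
  have hD : dotv a (cp b δk) ≠ 0 := by
    rw [dotv_cyclic, hδk, dotv_single]; exact hk
  have hD' : dotv b (cp a δk) ≠ 0 := by
    rw [dotv_cyclic, hδk, dotv_single]
    intro hcon
    apply hk
    have := congrFun (cp_anti a b) k
    rw [hcon] at this
    simpa using this.symm
  constructor
  · have h1 : dotv (s • a + t • b) (cp b δk) = s * dotv a (cp b δk) := by
      rw [dotv_add_smul_left, dotv_cp_self_left, mul_zero, add_zero]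
    rw [h] at h1
    have : dotv (0 : Fin 3 → F) (cp b δk) = 0 := by simp [dotv]
    rw [this] at h1
    rcases mul_eq_zero.mp h1.symm with hh | hh
    · exact hh
    · exact absurd hh hD
  · have h1 : dotv (s • a + t • b) (cp a δk) = t * dotv b (cp a δk) := by
      rw [dotv_add_smul_left, dotv_cp_self_left, mul_zero, zero_add]
    rw [h] at h1
    have : dotv (0 : Fin 3 → F) (cp a δk) = 0 := by simp [dotv]
    rw [this] at h1
    rcases mul_eq_zero.mp h1.symm with hh | hh
    · exact hh
    · exact absurd hh hD'

end CP

namespace CP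
variable {F : Type*} [Field F]
open Projectivization

lemma finitePt [Finite F] : Finite (Projectivization F (Fin 3 → F)) := Quotient.finite _

lemma cp_ne_zero_left {a b : Fin 3 → F} (hab : cp a b ≠ 0) : a ≠ 0 := by
  intro h; apply hab; rw [h]; funext i; fin_cases i <;> simp [cp]

lemma cp_ne_zero_right {a b : Fin 3 → F} (hab : cp a b ≠ 0) : b ≠ 0 := by
  intro h; apply hab; rw [h]; funext i; fin_cases i <;> simp [cp]

lemma not_prop_of_cp {a b : Fin 3 → F} (hab : cp a b ≠ 0) : ∀ c : F, b ≠ c • a := by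
  intro c h; apply hab; rw [h]; exact cp_smul_self c a

lemma combo_ne_zero {a b : Fin 3 → F} (hab : cp a b ≠ 0) (t : F) : a + t • b ≠ 0 := by
  intro h
  have h0 : (1:F) • a + t • b = 0 := by rw [one_smul]; exact h
  exact one_ne_zero (indep_coeffs hab h0).1

lemma mem_lineSet_iff_span {a b : Fin 3 → F} (hab : cp a b ≠ 0)
    (p : Projectivization F (Fin 3 → F)) :
    p ∈ lineSet a b ↔ ∃ s t : F, p.rep = s • a + t • b := by
  rw [mem_lineSet_iff]
  constructor
  · exact fun h => mem_span_pair hab h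
  · rintro ⟨s, t, h⟩
    rw [h, dotv_add_smul_left, dotv_cp_self_left, dotv_cp_self_right]; ring

lemma lineSet_card [Fintype F] {a b : Fin 3 → F} (hab : cp a b ≠ 0) :
    (lineSet a b).ncard = Fintype.card F + 1 := by
  haveI : Finite (Projectivization F (Fin 3 → F)) := finitePt
  have hb : b ≠ 0 := cp_ne_zero_right hab
  set fL : F → Projectivization F (Fin 3 → F) :=
    fun t => Projectivization.mk F (a + t • b) (combo_ne_zero hab t) with hfLdef
  have hEq : lineSet a b = insert (Projectivization.mk F b hb) (Set.range fL) := by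
    ext p
    constructor
    · intro hp
      obtain ⟨s, t, hst⟩ := (mem_lineSet_iff_span hab p).mp hp
      by_cases hs : s = 0
      · left
        rw [← mk_rep p]
        rw [mk_eq_mk_iff]
        have ht : t ≠ 0 := by
          intro h0
          apply p.rep_nonzero
          rw [hst, hs, h0, zero_smul, zero_smul, add_zero]
        refine ⟨Units.mk0 t ht, ?_⟩
        rw [hst, hs, zero_smul, zero_add]; rfl
      · right
        refine ⟨t / s, ?_⟩
        rw [hfLdef]
        conv_rhs => rw [← mk_rep p]
        rw [mk_eq_mk_iff]
        refine ⟨(Units.mk0 s hs)⁻¹, ?_⟩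
        rw [hst, Units.smul_def, Units.val_inv_eq_inv_val, Units.val_mk0, smul_add,
          smul_smul, smul_smul, inv_mul_cancel₀ hs, one_smul, div_eq_inv_mul]
    · intro hp
      rcases hp with hp | ⟨t, ht⟩
      · rw [hp, mem_lineSet_mk]
        exact dotv_cp_self_right a b
      · rw [← ht, hfLdef, mem_lineSet_mk]
        have : a + t • b = (1:F) • a + t • b := by rw [one_smul]
        rw [this, dotv_add_smul_left, dotv_cp_self_left, dotv_cp_self_right]; ring
  have hnm : Projectivization.mk F b hb ∉ Set.range fL := by
    rintro ⟨t, ht⟩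
    rw [hfLdef, mk_eq_mk_iff] at ht
    obtain ⟨u, hu⟩ := ht
    have h0 : (1:F) • a + (t - (u:F)) • b = 0 := by
      funext i
      have hh := congrFun hu i
      simp only [Units.smul_def, Pi.smul_apply, Pi.add_apply, smul_eq_mul, Pi.zero_apply,
        one_mul, sub_mul] at hh ⊢
      linear_combination -hh
    exact one_ne_zero (indep_coeffs hab h0).1
  have hinj : Function.Injective fL := by
    intro t t' h
    rw [hfLdef, mk_eq_mk_iff] at h
    obtain ⟨u, hu⟩ := h
    have h0 : ((u:F) - 1) • a + ((u:F) * t' - t) • b = 0 := by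
      funext i
      have hh := congrFun hu i
      simp only [Units.smul_def, Pi.smul_apply, Pi.add_apply, smul_eq_mul, Pi.zero_apply,
        sub_mul, mul_add] at hh ⊢
      linear_combination hh
    obtain ⟨h1, h2⟩ := indep_coeffs hab h0
    have hu1 : (u:F) = 1 := by linear_combination h1
    rw [hu1, one_mul] at h2
    linear_combination -h2
  rw [hEq, Set.ncard_insert_of_notMem hnm, ← Set.image_univ,
    Set.ncard_image_of_injective _ hinj, Set.ncard_univ, Nat.card_eq_fintype_card]

end CP

namespace CP
variable {F : Type*} [Field F]
open Projectivization

/-- choice of a tangent vector not proportional to `e` -/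
lemma exists_w (γ e : Fin 3 → F) (i₀ : Fin 3) (hi₀ : γ i₀ ≠ 0) (he : e ≠ 0)
    (hEγ : dotv e γ = 0) : ∃ w, dotv w γ = 0 ∧ ∀ c : F, w ≠ c • e := by
  obtain ⟨j₁, j₂, hj₁, hj₂, hj₁₂, htri⟩ :
      ∃ j₁ j₂ : Fin 3, j₁ ≠ i₀ ∧ j₂ ≠ i₀ ∧ j₁ ≠ j₂ ∧ ∀ m : Fin 3, m = i₀ ∨ m = j₁ ∨ m = j₂ := by
    fin_cases i₀
    · exact ⟨1, 2, by decide, by decide, by decide, by decide⟩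
    · exact ⟨0, 2, by decide, by decide, by decide, by decide⟩
    · exact ⟨0, 1, by decide, by decide, by decide, by decide⟩
  set w₁ : Fin 3 → F := γ i₀ • (Pi.single j₁ 1 : Fin 3 → F) - γ j₁ • (Pi.single i₀ 1 : Fin 3 → F) with hw₁def
  set w₂ : Fin 3 → F := γ i₀ • (Pi.single j₂ 1 : Fin 3 → F) - γ j₂ • (Pi.single i₀ 1 : Fin 3 → F) with hw₂def
  have hw₁γ : dotv w₁ γ = 0 := by
    rw [hw₁def, dotv_smul_sub_left, dotv_single, dotv_single]; ring
  have hw₂γ : dotv w₂ γ = 0 := by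
    rw [hw₂def, dotv_smul_sub_left, dotv_single, dotv_single]; ring
  have happ : ∀ (j : Fin 3) (m : Fin 3),
      (γ i₀ • (Pi.single j 1 : Fin 3 → F) - γ j • (Pi.single i₀ 1 : Fin 3 → F) : Fin 3 → F) m
        = γ i₀ * (Pi.single j 1 : Fin 3 → F) m - γ j * (Pi.single i₀ 1 : Fin 3 → F) m := by
    intro j m; simp
  by_cases hc₁ : ∀ c : F, w₁ ≠ c • e
  · exact ⟨w₁, hw₁γ, hc₁⟩
  · push_neg at hc₁
    obtain ⟨c₁, hc₁⟩ := hc₁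
    refine ⟨w₂, hw₂γ, fun c₂ hc₂ => ?_⟩
    have hcf₁ : ∀ m, γ i₀ * (Pi.single j₁ 1 : Fin 3 → F) m - γ j₁ * (Pi.single i₀ 1 : Fin 3 → F) m = c₁ * e m := by
      intro m
      have := congrFun hc₁ m
      rw [hw₁def] at this
      simpa using this
    have hcf₂ : ∀ m, γ i₀ * (Pi.single j₂ 1 : Fin 3 → F) m - γ j₂ * (Pi.single i₀ 1 : Fin 3 → F) m = c₂ * e m := by
      intro m
      have := congrFun hc₂ m
      rw [hw₂def] at this
      simpa using this
    have hc₁0 : c₁ ≠ 0 := by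
      intro h
      have := hcf₁ j₁
      rw [h, Pi.single_eq_same, Pi.single_eq_of_ne hj₁] at this
      simp at this
      exact hi₀ this
    have hc₂0 : c₂ ≠ 0 := by
      intro h
      have := hcf₂ j₂
      rw [h, Pi.single_eq_same, Pi.single_eq_of_ne hj₂] at this
      simp at this
      exact hi₀ this
    have hej₂ : e j₂ = 0 := by
      have := hcf₁ j₂
      rw [Pi.single_eq_of_ne (Ne.symm hj₁₂), Pi.single_eq_of_ne hj₂] at this
      simp at this
      rcases this with h | h
      · exact absurd h hc₁0
      · exact h
    have hej₁ : e j₁ = 0 := by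
      have := hcf₂ j₁
      rw [Pi.single_eq_of_ne hj₁₂, Pi.single_eq_of_ne hj₁] at this
      simp at this
      rcases this with h | h
      · exact absurd h hc₂0
      · exact h
    have heu : e = e i₀ • (Pi.single i₀ 1 : Fin 3 → F) := by
      funext m
      rcases htri m with rfl | rfl | rfl
      · simp
      · simp [hej₁, Pi.single_eq_of_ne hj₁]
      · simp [hej₂, Pi.single_eq_of_ne hj₂]
    have : dotv e γ = e i₀ * γ i₀ := by
      conv_lhs => rw [heu]
      rw [dotv_smul_left, dotv_single]
    rw [hEγ] at this
    have hei₀ : e i₀ = 0 := by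
      rcases mul_eq_zero.mp this.symm with h | h
      · exact h
      · exact absurd h hi₀
    apply he
    rw [heu, hei₀, zero_smul]

lemma indep_triple {γ e w : Fin 3 → F} {i₀ : Fin 3} (hi₀ : γ i₀ ≠ 0) (he : e ≠ 0)
    (hwe : ∀ c : F, w ≠ c • e) (hEγ : dotv e γ = 0) (hwγ : dotv w γ = 0) :
    ∀ s t r : F, s • e + t • w + r • (Pi.single i₀ 1 : Fin 3 → F) = 0 → s = 0 ∧ t = 0 ∧ r = 0 := by
  intro s t r h
  have hdot : dotv (s • e + t • w + r • (Pi.single i₀ 1 : Fin 3 → F)) γ = r * γ i₀ := by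
    rw [dotv_add_left, dotv_add_smul_left, dotv_smul_left, dotv_single, hEγ, hwγ]; ring
  rw [h] at hdot
  have h00 : dotv (0 : Fin 3 → F) γ = 0 := by simp [dotv]
  rw [h00] at hdot
  have hr : r = 0 := by
    rcases mul_eq_zero.mp hdot.symm with hh | hh
    · exact hh
    · exact absurd hh hi₀
  rw [hr, zero_smul, add_zero] at h
  by_cases ht : t = 0
  · rw [ht, zero_smul, add_zero] at h
    rcases smul_eq_zero.mp h with hh | hh
    · exact ⟨hh, ht, hr⟩
    · exact absurd hh he
  · exfalso
    apply hwe (-s / t)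
    funext i
    have hh := congrFun h i
    simp only [Pi.add_apply, Pi.smul_apply, smul_eq_mul, Pi.zero_apply] at hh ⊢
    field_simp
    linear_combination hh

lemma span_triple {γ e w : Fin 3 → F} {i₀ : Fin 3} (hi₀ : γ i₀ ≠ 0) (hcp : cp e w ≠ 0)
    (hEγ : dotv e γ = 0) (hwγ : dotv w γ = 0) :
    ∀ v : Fin 3 → F, ∃ s t r : F, v = s • e + t • w + r • (Pi.single i₀ 1 : Fin 3 → F) := by
  intro v
  obtain ⟨c, hcγ⟩ := perp_span e w γ hcp hEγ hwγ
  have hc0 : c ≠ 0 := by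
    intro h
    rw [h, zero_smul] at hcγ
    exact hi₀ (by rw [hcγ]; rfl)
  set r : F := dotv v γ / γ i₀ with hrdef
  have hv'γ : dotv (v - r • (Pi.single i₀ 1 : Fin 3 → F)) γ = 0 := by
    rw [dotv_sub_smul_left, dotv_single, hrdef, div_mul_cancel₀ _ hi₀, sub_self]
  have hv'cp : dotv (v - r • (Pi.single i₀ 1 : Fin 3 → F)) (cp e w) = 0 := by
    have h1 : dotv (v - r • (Pi.single i₀ 1 : Fin 3 → F)) γ
        = c * dotv (v - r • (Pi.single i₀ 1 : Fin 3 → F)) (cp e w) := by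
      rw [dotv_comm, hcγ, dotv_smul_left, dotv_comm]
    rw [hv'γ] at h1
    rcases mul_eq_zero.mp h1.symm with hh | hh
    · exact absurd hh hc0
    · exact hh
  obtain ⟨s, t, hst⟩ := mem_span_pair hcp hv'cp
  refine ⟨s, t, r, ?_⟩
  rw [← hst, sub_add_cancel]

end CP

namespace CP
variable {F : Type*} [Field F] {Q : MvPolynomial (Fin 3) F}
open Projectivization

lemma mem_conic_mk (hQ2 : Q.IsHomogeneous 2) (v : Fin 3 → F) (hv : v ≠ 0) :
    Projectivization.mk F v hv ∈ conicPoints Q ↔ eval v Q = 0 := by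
  obtain ⟨c, hc⟩ := exists_smul_eq_mk_rep F v hv
  rw [conicPoints, Set.mem_setOf_eq, ← hc, Units.smul_def, eval_smul_v hQ2]
  constructor
  · intro h
    rcases mul_eq_zero.mp h with h | h
    · exact absurd (pow_eq_zero_iff (by norm_num)|>.mp h) c.ne_zero
    · exact h
  · intro h; rw [h, mul_zero]

theorem conic_card [Fintype F] (hQ2 : Q.IsHomogeneous 2) (hQs : SmoothPlaneCurve Q)
    {e : Fin 3 → F} (he : e ≠ 0) (hqe : eval e Q = 0) :
    (conicPoints Q).ncard = Fintype.card F + 1 := by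
  haveI : Finite (Projectivization F (Fin 3 → F)) := finitePt
  classical
  obtain ⟨i₀, hi₀⟩ := grad_ne_zero hQs he hqe
  set γ : Fin 3 → F := gradv Q e with hγdef
  set u : Fin 3 → F := (Pi.single i₀ 1 : Fin 3 → F) with hudef
  have hEγ : dotv e γ = 0 := by
    have h := euler_v hQ2 e
    rw [hqe, mul_zero] at h
    exact h
  obtain ⟨w, hwγ, hwe⟩ := exists_w γ e i₀ hi₀ he hEγ
  have hqw : eval w Q ≠ 0 := by
    intro h
    exact no_line hQ2 hQs he hwe hqe h hwγ
  have hcpew : cp e w ≠ 0 := by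
    intro h
    obtain ⟨c, hc⟩ := cp_eq_zero e w h he
    exact hwe c hc
  have hLI := indep_triple hi₀ he hwe hEγ hwγ
  have hSpan := span_triple hi₀ hcpew hEγ hwγ
  have hκ : Bv Q e u = γ i₀ := dotv_single i₀ γ
  have hBew : Bv Q e w = 0 := hwγ
  have hval : ∀ s t r : F, eval (s • e + (t • w + r • u)) Q
      = s * (r * γ i₀) + eval (t • w + r • u) Q := by
    intro s t r
    have h1 : s • e + (t • w + r • u) = s • e + (1:F) • (t • w + r • u) := by rw [one_smul]
    rw [h1, eval_combo hQ2, hqe, Bv_add_smul_right hQ2, hκ, hBew]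
    ring
  have hnz : ∀ s t : F, s • e + (t • w + u) ≠ 0 := by
    intro s t h
    have h' : s • e + t • w + (1:F) • u = 0 := by rw [one_smul, add_assoc]; exact h
    exact one_ne_zero (hLI s t 1 h').2.2
  set fC : F → Projectivization F (Fin 3 → F) :=
    fun b => Projectivization.mk F ((-(eval (b • w + u) Q) / γ i₀) • e + (b • w + u))
      (hnz _ b) with hfCdef
  have hfC_mem : ∀ b, fC b ∈ conicPoints Q := by
    intro b
    rw [hfCdef, mem_conic_mk hQ2]
    have h1 : (-(eval (b • w + u) Q) / γ i₀) • e + (b • w + u)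
        = (-(eval (b • w + u) Q) / γ i₀) • e + (b • w + (1:F) • u) := by rw [one_smul]
    rw [h1, hval]
    rw [one_smul]
    field_simp
    ring
  have hmk_e : Projectivization.mk F e he ∈ conicPoints Q := (mem_conic_mk hQ2 e he).mpr hqe
  have hEq : conicPoints Q = insert (Projectivization.mk F e he) (Set.range fC) := by
    ext p
    constructor
    · intro hp
      have hp' : eval p.rep Q = 0 := hp
      obtain ⟨s, t, r, hv⟩ := hSpan p.rep
      have hv' : p.rep = s • e + (t • w + r • u) := by rw [hv, add_assoc]
      have hval0 : s * (r * γ i₀) + eval (t • w + r • u) Q = 0 := by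
        rw [← hval s t r, ← hv', hp']
      by_cases hr : r = 0
      · left
        rw [hr, zero_smul, add_zero] at hv'
        have h2 : eval (t • w + (0:F) • u) Q = t^2 * eval w Q := by
          rw [eval_combo hQ2]; ring
        rw [hr] at hval0
        rw [h2] at hval0
        have ht : t = 0 := by
          have h3 : t^2 * eval w Q = 0 := by linear_combination hval0
          rcases mul_eq_zero.mp h3 with h | h
          · exact pow_eq_zero_iff (by norm_num : (2:ℕ) ≠ 0) |>.mp h
          · exact absurd h hqw
        rw [ht, zero_smul, add_zero] at hv'
        have hs : s ≠ 0 := by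
          intro h
          apply p.rep_nonzero
          rw [hv', h, zero_smul]
        rw [← mk_rep p, mk_eq_mk_iff]
        exact ⟨Units.mk0 s hs, by rw [hv']; rfl⟩
      · right
        refine ⟨t/r, ?_⟩
        rw [hfCdef]
        conv_rhs => rw [← mk_rep p]
        rw [mk_eq_mk_iff]
        refine ⟨(Units.mk0 r hr)⁻¹, ?_⟩
        have hscale : t • w + r • u = r • ((t/r) • w + u) := by
          rw [smul_add, smul_smul, mul_div_cancel₀ _ hr]
        have h2 : eval (t • w + r • u) Q = r^2 * eval ((t/r) • w + u) Q := by
          rw [hscale, eval_smul_v hQ2]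
        have hkey : s * γ i₀ = -(r * eval ((t/r) • w + u) Q) := by
          apply mul_left_cancel₀ hr
          rw [h2] at hval0
          linear_combination hval0
        funext i
        have hrep := congrFun hv i
        simp only [Units.smul_def, Units.val_inv_eq_inv_val, Units.val_mk0,
          Pi.smul_apply, Pi.add_apply, smul_eq_mul] at hrep ⊢
        rw [hrep]
        field_simp
        linear_combination (e i) * hkey
    · intro hp
      rcases hp with hp | ⟨b, hb⟩
      · rw [hp]; exact hmk_e
      · rw [← hb]; exact hfC_mem b
  have hnm : Projectivization.mk F e he ∉ Set.range fC := by
    rintro ⟨b, hb⟩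
    rw [hfCdef, mk_eq_mk_iff] at hb
    obtain ⟨α, hα⟩ := hb
    have h0 : (((α:F)) - (-(eval (b • w + u) Q) / γ i₀)) • e + (-b) • w + (-1 : F) • u = 0 := by
      funext i
      have hh := congrFun hα i
      simp only [Units.smul_def, Pi.smul_apply, Pi.add_apply, smul_eq_mul,
        Pi.zero_apply] at hh ⊢
      linear_combination hh
    have := (hLI _ _ _ h0).2.2
    norm_num at this
  have hinjC : Function.Injective fC := by
    intro b b' h
    rw [hfCdef, mk_eq_mk_iff] at h
    obtain ⟨α, hα⟩ := h
    have h0 : ((α:F) * (-(eval (b' • w + u) Q) / γ i₀) - (-(eval (b • w + u) Q) / γ i₀)) • e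
        + ((α:F) * b' - b) • w + ((α:F) - 1) • u = 0 := by
      funext i
      have hh := congrFun hα i
      simp only [Units.smul_def, Pi.smul_apply, Pi.add_apply, smul_eq_mul,
        Pi.zero_apply] at hh ⊢
      linear_combination hh
    obtain ⟨-, h2, h3⟩ := hLI _ _ _ h0
    have hα1 : (α:F) = 1 := by linear_combination h3
    rw [hα1, one_mul] at h2
    linear_combination -h2
  rw [hEq, Set.ncard_insert_of_notMem hnm, ← Set.image_univ,
    Set.ncard_image_of_injective _ hinjC, Set.ncard_univ, Nat.card_eq_fintype_card]

end CP

namespace CP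
variable {F : Type*} [Field F] {Q : MvPolynomial (Fin 3) F}
open Projectivization

lemma dotv_cp_swap13 (x y z : Fin 3 → F) : dotv x (cp y z) = -dotv z (cp y x) := by
  simp [dotv, cp]; ring

lemma eq_mk_of_rep_smul {v : Fin 3 → F} (hv : v ≠ 0) {p : Projectivization F (Fin 3 → F)}
    (t : F) (h : p.rep = t • v) : p = Projectivization.mk F v hv := by
  have ht : t ≠ 0 := by
    intro h0; apply p.rep_nonzero; rw [h, h0, zero_smul]
  rw [← mk_rep p, mk_eq_mk_iff]
  exact ⟨Units.mk0 t ht, h.symm⟩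

lemma dotv_neg_right (x y : Fin 3 → F) : dotv x (-y) = -dotv x y := by
  simp [dotv]; ring

lemma lineSet_symm (a b : Fin 3 → F) : lineSet a b = lineSet b a := by
  ext p
  rw [mem_lineSet_iff, mem_lineSet_iff, cp_anti, dotv_neg_right, neg_eq_zero]

lemma dotv_rep_mk_ne (v : Fin 3 → F) (hv : v ≠ 0) (n : Fin 3 → F) (h : dotv v n ≠ 0) :
    dotv (Projectivization.mk F v hv).rep n ≠ 0 :=
  fun hc => h (dotv_mk_rep_eq_zero v hv n hc)

/-- a line meets the conic exactly in its two defining points -/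
lemma line_conic (hQ2 : Q.IsHomogeneous 2) (hQs : SmoothPlaneCurve Q)
    {a b : Fin 3 → F} (hab : cp a b ≠ 0) (hqa : eval a Q = 0) (hqb : eval b Q = 0) :
    lineSet a b ∩ conicPoints Q
      = {Projectivization.mk F a (cp_ne_zero_left hab),
         Projectivization.mk F b (cp_ne_zero_right hab)} := by
  have hBab : Bv Q a b ≠ 0 := fun h =>
    no_line hQ2 hQs (cp_ne_zero_left hab) (not_prop_of_cp hab) hqa hqb h
  ext p
  constructor
  · rintro ⟨hl, hc⟩
    obtain ⟨s, t, hst⟩ := (mem_lineSet_iff_span hab p).mp hl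
    have hc' : eval p.rep Q = 0 := hc
    rw [hst, eval_combo hQ2, hqa, hqb] at hc'
    have hst0 : s * t = 0 := by
      have h1 : s * t * Bv Q a b = 0 := by linear_combination hc'
      rcases mul_eq_zero.mp h1 with h | h
      · exact h
      · exact absurd h hBab
    rcases mul_eq_zero.mp hst0 with hs | ht
    · right
      rw [hs, zero_smul, zero_add] at hst
      exact eq_mk_of_rep_smul _ t hst
    · left
      rw [ht, zero_smul, add_zero] at hst
      exact eq_mk_of_rep_smul _ s hst
  · intro hp
    rcases hp with rfl | rfl
    · constructor
      · rw [mem_lineSet_mk]; exact dotv_cp_self_left a b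
      · exact (mem_conic_mk hQ2 a _).mpr hqa
    · constructor
      · rw [mem_lineSet_mk]; exact dotv_cp_self_right a b
      · exact (mem_conic_mk hQ2 b _).mpr hqb

/-- two lines through a common point `a` meet only at `a` -/
lemma lines_shared {a b c : Fin 3 → F} (hab : cp a b ≠ 0) (hac : cp a c ≠ 0)
    (hc : dotv c (cp a b) ≠ 0) {p : Projectivization F (Fin 3 → F)}
    (hp1 : p ∈ lineSet a b) (hp2 : p ∈ lineSet a c) :
    p = Projectivization.mk F a (cp_ne_zero_left hab) := by
  obtain ⟨s, t, hst⟩ := (mem_lineSet_iff_span hab p).mp hp1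
  have h2 : dotv p.rep (cp a c) = 0 := (mem_lineSet_iff _ _ _).mp hp2
  rw [hst, dotv_add_smul_left, dotv_cp_self_left] at h2
  have hbc : dotv b (cp a c) ≠ 0 := by
    rw [dotv_cp_swap13]
    intro h
    apply hc
    have : dotv c (cp a b) = 0 := by linear_combination -h
    exact this
  have ht : t = 0 := by
    have h3 : t * dotv b (cp a c) = 0 := by linear_combination h2
    rcases mul_eq_zero.mp h3 with h | h
    · exact h
    · exact absurd h hbc
  rw [ht, zero_smul, add_zero] at hst
  exact eq_mk_of_rep_smul _ s hst

/-- two lines with no common defining point meet in exactly one point -/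
lemma unique_common {a b c d : Fin 3 → F} (hab : cp a b ≠ 0) (hcd : cp c d ≠ 0)
    (hc : dotv c (cp a b) ≠ 0) :
    ∃! p : Projectivization F (Fin 3 → F), p ∈ lineSet a b ∩ lineSet c d := by
  have hv0 : cp (cp a b) (cp c d) ≠ 0 := by
    intro h
    obtain ⟨k, hk⟩ := cp_eq_zero _ _ h hab
    have hk0 : k ≠ 0 := by
      intro h0
      apply hcd
      rw [hk, h0, zero_smul]
    apply hc
    have h1 : dotv c (cp c d) = 0 := dotv_cp_self_left c d
    rw [hk, dotv_comm, dotv_smul_left] at h1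
    rcases mul_eq_zero.mp h1 with h | h
    · exact absurd h hk0
    · rw [dotv_comm]; exact h
  refine ⟨Projectivization.mk F _ hv0, ⟨?_, ?_⟩, ?_⟩
  · rw [mem_lineSet_mk, dotv_comm]
    exact dotv_cp_self_left _ _
  · rw [mem_lineSet_mk, dotv_comm]
    exact dotv_cp_self_right _ _
  · rintro p ⟨hp1, hp2⟩
    -- p is determined: its rep is proportional to cp (cp a b) (cp c d)
    have h1 : dotv p.rep (cp a b) = 0 := (mem_lineSet_iff _ _ _).mp hp1
    have h2 : dotv p.rep (cp c d) = 0 := (mem_lineSet_iff _ _ _).mp hp2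
    -- cross of the two normals is perpendicular to every vector perp to both
    -- use: cp (cp a b) (cp c d) = dotv (cp cd)?? use triple identity with rep
    -- Instead: show rep and the candidate vector are proportional via perp_span on p.rep?
    -- both p.rep and v := cp (cp a b)(cp c d) are in the kernel of both functionals.
    -- we show cp p.rep v = 0 and use cp_eq_zero.
    have hrv : cp (cp (cp a b) (cp c d)) p.rep = 0 := by
      rw [triple, h1, h2, zero_smul, zero_smul, sub_zero]
    obtain ⟨k, hk⟩ := cp_eq_zero _ _ hrv hv0
    exact eq_mk_of_rep_smul hv0 k hk

end CP

/-- the ten index pairs -/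
def PRf : Finset (Fin 5 × Fin 5) :=
  {(0,1),(0,2),(0,3),(0,4),(1,2),(1,3),(1,4),(2,3),(2,4),(3,4)}

/-- the fifteen unordered pairs of disjoint index pairs -/
def PPf : Finset ((Fin 5 × Fin 5) × (Fin 5 × Fin 5)) :=
  {((0,1),(2,3)), ((0,1),(2,4)), ((0,1),(3,4)), ((0,2),(1,3)), ((0,2),(1,4)),
   ((0,2),(3,4)), ((0,3),(1,2)), ((0,3),(1,4)), ((0,3),(2,4)), ((0,4),(1,2)),
   ((0,4),(1,3)), ((0,4),(2,3)), ((1,2),(3,4)), ((1,3),(2,4)), ((1,4),(2,3))}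

instance (z w : Fin 5 × Fin 5) : Decidable (Shares z w) := by
  unfold Shares; infer_instance

set_option maxRecDepth 100000 in
lemma hPR1 : ∀ z ∈ PRf, z.1 ≠ z.2 := by decide
set_option maxRecDepth 100000 in
lemma hPRcover : ∀ i j : Fin 5, i ≠ j → (i,j) ∈ PRf ∨ (j,i) ∈ PRf := by decide
set_option maxRecDepth 100000 in
lemma hPRcard : PRf.card = 10 := by decide
set_option maxRecDepth 100000 in
lemma hno_rev : ∀ z ∈ PRf, ∀ w ∈ PRf, z.1 = w.2 → z.2 = w.1 → False := by decide
set_option maxRecDepth 100000 in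
lemma hshare3 : ∀ z₁ ∈ PRf, ∀ z₂ ∈ PRf, ∀ z₃ ∈ PRf, z₁ ≠ z₂ → z₁ ≠ z₃ → z₂ ≠ z₃ →
    Shares z₁ z₂ ∨ Shares z₁ z₃ ∨ Shares z₂ z₃ := by decide
set_option maxRecDepth 100000 in
lemma hPP1 : ∀ w ∈ PPf, w.1 ∈ PRf ∧ w.2 ∈ PRf ∧ w.1 ≠ w.2 ∧ ¬ Shares w.1 w.2 := by decide
set_option maxRecDepth 100000 in
lemma hPPcover : ∀ z ∈ PRf, ∀ z' ∈ PRf, z ≠ z' → ¬ Shares z z' →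
    (z,z') ∈ PPf ∨ (z',z) ∈ PPf := by decide
set_option maxRecDepth 100000 in
lemma hPPcard : PPf.card = 15 := by decide
set_option maxRecDepth 100000 in
lemma hPP3 : ∀ w ∈ PPf, ∀ w' ∈ PPf, w ≠ w' →
    (w'.1 ≠ w.1 ∧ w'.1 ≠ w.2) ∨ (w'.2 ≠ w.1 ∧ w'.2 ≠ w.2) := by decide

open CP Finset in
/-- For `q ≥ 4`, given five points of `ℙ²(𝔽_q)` in general position, the union `𝔠` of the
smooth conic `C` through them and the ten lines through pairs of them has exactly
`11q − 24` rational points. -/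
theorem card_union_conic_and_ten_lines {F : Type*} [Field F] [Fintype F]
    (hq : 4 ≤ Fintype.card F)
    (P : Fin 5 → (Fin 3 → F))
    (h0 : ∀ i, P i ≠ 0)
    (hdist : ∀ i j, i ≠ j → ∀ c : F, c • P i ≠ P j)
    (hgen : ∀ i j l : Fin 5, i ≠ j → i ≠ l → j ≠ l → ¬ Collinear3 (P i) (P j) (P l))
    (Q : MvPolynomial (Fin 3) F) (hQ2 : Q.IsHomogeneous 2) (hQ0 : Q ≠ 0)
    (hQs : SmoothPlaneCurve Q) (hQP : ∀ i, MvPolynomial.eval (P i) Q = 0) :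
    Nat.card {p : Projectivization F (Fin 3 → F) //
        p ∈ conicPoints Q ∪ linesThrough P} = 11 * Fintype.card F - 24 := by
  classical
  haveI : Finite (Projectivization F (Fin 3 → F)) := CP.finitePt
  haveI : Fintype (Projectivization F (Fin 3 → F)) := Fintype.ofFinite _
  set q := Fintype.card F with hq_def
  -- derived nondegeneracy facts
  have hcpP : ∀ i j : Fin 5, i ≠ j → CP.cp (P i) (P j) ≠ 0 := by
    intro i j hij h
    obtain ⟨c, hc⟩ := CP.cp_eq_zero _ _ h (h0 i)
    exact hdist i j hij c hc.symm
  have hdl : ∀ i j l : Fin 5, i ≠ j → l ≠ i → l ≠ j →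
      CP.dotv (P l) (CP.cp (P i) (P j)) ≠ 0 := by
    intro i j l hij hli hlj h
    apply hgen i j l hij (Ne.symm hli) (Ne.symm hlj)
    refine ⟨{ toFun := fun v => CP.dotv v (CP.cp (P i) (P j)),
              map_add' := by intros; simp [CP.dotv]; ring,
              map_smul' := by intros; simp [CP.dotv]; ring }, ?_, ?_, ?_, ?_⟩
    · intro h0'
      obtain ⟨k, hk⟩ : ∃ k, CP.cp (P i) (P j) k ≠ 0 := by
        by_contra hc; push_neg at hc; exact hcpP i j hij (funext hc)
      have h1 := DFunLike.congr_fun h0' (Pi.single k (1:F))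
      simp only [LinearMap.coe_mk, AddHom.coe_mk, LinearMap.zero_apply] at h1
      rw [CP.dotv_single] at h1
      exact hk h1
    · exact CP.dotv_cp_self_left _ _
    · exact CP.dotv_cp_self_right _ _
    · exact h
  have hmkP : ∀ i : Fin 5, Projectivization.mk F (P i) (h0 i) ∈ conicPoints Q :=
    fun i => (CP.mem_conic_mk hQ2 _ _).mpr (hQP i)
  have hmkne : ∀ i j : Fin 5, i ≠ j →
      Projectivization.mk F (P i) (h0 i) ≠ Projectivization.mk F (P j) (h0 j) := by
    intro i j hij h
    rw [Projectivization.mk_eq_mk_iff] at h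
    obtain ⟨u, hu⟩ := h
    exact hdist j i (Ne.symm hij) u hu
  -- the finsets
  set Cf : Finset (Projectivization F (Fin 3 → F)) :=
    univ.filter (· ∈ conicPoints Q) with hCf
  set Lf : (Fin 5 × Fin 5) → Finset (Projectivization F (Fin 3 → F)) :=
    fun z => univ.filter (· ∈ CP.lineSet (P z.1) (P z.2)) with hLf
  set Af : (Fin 5 × Fin 5) → Finset (Projectivization F (Fin 3 → F)) :=
    fun z => Lf z \ Cf with hAf
  set SU : Finset (Projectivization F (Fin 3 → F)) := PRf.biUnion Af with hSU
  have hCfm : ∀ p, p ∈ Cf ↔ p ∈ conicPoints Q := by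
    intro p; rw [hCf, Finset.mem_filter]; simp
  have hAfm : ∀ z p, p ∈ Af z ↔ (p ∈ CP.lineSet (P z.1) (P z.2) ∧ p ∉ conicPoints Q) := by
    intro z p
    rw [hAf]
    simp only [Finset.mem_sdiff, hLf, Finset.mem_filter, Finset.mem_univ, true_and]
    rw [hCfm]
  -- shared-point lemma
  have hshared : ∀ a b c : Fin 5, a ≠ b → a ≠ c → b ≠ c →
      ∀ p : Projectivization F (Fin 3 → F),
      p ∈ CP.lineSet (P a) (P b) → p ∈ CP.lineSet (P a) (P c) → p ∈ conicPoints Q := by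
    intro a b c hab hac hbc p h1 h2
    have hp := CP.lines_shared (hcpP a b hab) (hcpP a c hac)
      (hdl a b c hab (Ne.symm hac) (Ne.symm hbc)) h1 h2
    rw [hp]; exact hmkP a
  have hAfAf : ∀ z ∈ PRf, ∀ w ∈ PRf, z ≠ w → Shares z w →
      ∀ p, p ∈ Af z → p ∈ Af w → False := by
    intro z hz w hw hzw hsh p hpz hpw
    obtain ⟨hpz1, hpz2⟩ := (hAfm z p).mp hpz
    obtain ⟨hpw1, hpw2⟩ := (hAfm w p).mp hpw
    have hz12 := hPR1 z hz
    have hw12 := hPR1 w hw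
    rcases hsh with h | h | h | h
    · apply hpz2
      have hne : z.2 ≠ w.2 := fun he => hzw (Prod.ext h he)
      refine hshared z.1 z.2 w.2 hz12 ?_ hne p hpz1 ?_
      · rw [h]; exact hw12
      · rw [h]; exact hpw1
    · apply hpz2
      have hne2 : z.2 ≠ w.1 := fun he => hno_rev z hz w hw h he
      refine hshared z.1 z.2 w.1 hz12 ?_ hne2 p hpz1 ?_
      · rw [h]; exact Ne.symm hw12
      · rw [CP.lineSet_symm] at hpw1
        rw [h]; exact hpw1
    · apply hpz2
      have hne2 : z.1 ≠ w.2 := fun he => hno_rev z hz w hw he h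
      refine hshared z.2 z.1 w.2 (Ne.symm hz12) ?_ hne2 p ?_ ?_
      · rw [h]; exact hw12
      · rw [CP.lineSet_symm] at hpz1; exact hpz1
      · rw [h]; exact hpw1
    · apply hpz2
      have hne2 : z.1 ≠ w.1 := fun he => hzw (Prod.ext he h)
      refine hshared z.2 z.1 w.1 (Ne.symm hz12) ?_ hne2 p ?_ ?_
      · rw [h]; exact Ne.symm hw12
      · rw [CP.lineSet_symm] at hpz1; exact hpz1
      · rw [CP.lineSet_symm] at hpw1; rw [h]; exact hpw1
  -- degrees
  set deg : Projectivization F (Fin 3 → F) → ℕ :=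
    fun p => (PRf.filter (fun z => p ∈ Af z)).card with hdeg
  have hdeg2 : ∀ p, deg p ≤ 2 := by
    intro p
    by_contra hc
    push_neg at hc
    obtain ⟨z₁, z₂, z₃, h1, h2, h3, h12, h13, h23⟩ := Finset.two_lt_card_iff.mp hc
    rw [Finset.mem_filter] at h1 h2 h3
    rcases hshare3 z₁ h1.1 z₂ h2.1 z₃ h3.1 h12 h13 h23 with h | h | h
    · exact hAfAf z₁ h1.1 z₂ h2.1 h12 h p h1.2 h2.2
    · exact hAfAf z₁ h1.1 z₃ h3.1 h13 h p h1.2 h3.2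
    · exact hAfAf z₂ h2.1 z₃ h3.1 h23 h p h2.2 h3.2
  -- cardinalities of the pieces
  have htf : ∀ S : Set (Projectivization F (Fin 3 → F)),
      (univ.filter (· ∈ S)).card = S.ncard := by
    intro S
    rw [Set.ncard_eq_toFinset_card']
    congr 1
    ext p
    simp [Set.mem_toFinset]
  have hCfcard : Cf.card = q + 1 := by
    rw [hCf, htf]
    exact CP.conic_card hQ2 hQs (h0 0) (hQP 0)
  have hLfcard : ∀ z ∈ PRf, (Lf z).card = q + 1 := by
    intro z hz
    rw [hLf]
    simp only []
    rw [htf]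
    exact CP.lineSet_card (hcpP z.1 z.2 (hPR1 z hz))
  have hLCcard : ∀ z ∈ PRf, (Lf z ∩ Cf).card = 2 := by
    intro z hz
    have hinter : Lf z ∩ Cf =
        {Projectivization.mk F (P z.1) (h0 z.1), Projectivization.mk F (P z.2) (h0 z.2)} := by
      ext p
      rw [Finset.mem_inter]
      have hs := CP.line_conic hQ2 hQs (hcpP z.1 z.2 (hPR1 z hz)) (hQP z.1) (hQP z.2)
      constructor
      · rintro ⟨hl, hc⟩
        have hmem : p ∈ CP.lineSet (P z.1) (P z.2) ∩ conicPoints Q := by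
          constructor
          · rw [hLf] at hl; simpa using hl
          · exact (hCfm p).mp hc
        rw [hs] at hmem
        simp only [Set.mem_insert_iff, Set.mem_singleton_iff] at hmem
        simpa [Finset.mem_insert, Finset.mem_singleton] using hmem
      · intro hp
        simp only [Finset.mem_insert, Finset.mem_singleton] at hp
        have hmem : p ∈ CP.lineSet (P z.1) (P z.2) ∩ conicPoints Q := by
          rw [hs]
          simpa [Set.mem_insert_iff, Set.mem_singleton_iff] using hp
        constructor
        · rw [hLf]; simp only [Finset.mem_filter, Finset.mem_univ, true_and]; exact hmem.1
        · exact (hCfm p).mpr hmem.2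
    rw [hinter]
    exact Finset.card_pair (hmkne z.1 z.2 (hPR1 z hz))
  have hAfcard : ∀ z ∈ PRf, (Af z).card = q - 1 := by
    intro z hz
    have h := Finset.card_inter_add_card_sdiff (Lf z) Cf
    rw [hLfcard z hz, hLCcard z hz] at h
    show (Lf z \ Cf).card = q - 1
    omega
  -- crossing points
  have hcross : ∀ w ∈ PPf, ∃ p₀, Af w.1 ∩ Af w.2 = {p₀} := by
    intro w hw
    obtain ⟨hw1, hw2, hwne, hwsh⟩ := hPP1 w hw
    simp only [Shares, not_or] at hwsh
    obtain ⟨hn1, hn2, hn3, hn4⟩ := hwsh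
    have hij := hPR1 _ hw1
    have hkl := hPR1 _ hw2
    have hdk : CP.dotv (P w.2.1) (CP.cp (P w.1.1) (P w.1.2)) ≠ 0 :=
      hdl _ _ _ hij (Ne.symm hn1) (Ne.symm hn3)
    obtain ⟨p₀, hp₀, hup⟩ := CP.unique_common (hcpP _ _ hij) (hcpP _ _ hkl) hdk
    have hp₀c : p₀ ∉ conicPoints Q := by
      intro hc
      have h1 : p₀ ∈ CP.lineSet (P w.1.1) (P w.1.2) ∩ conicPoints Q := ⟨hp₀.1, hc⟩
      rw [CP.line_conic hQ2 hQs (hcpP _ _ hij) (hQP _) (hQP _)] at h1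
      simp only [Set.mem_insert_iff, Set.mem_singleton_iff] at h1
      rcases h1 with h1 | h1
      · have h2 := hp₀.2
        rw [h1, CP.mem_lineSet_mk] at h2
        exact hdl w.2.1 w.2.2 w.1.1 hkl hn1 hn2 h2
      · have h2 := hp₀.2
        rw [h1, CP.mem_lineSet_mk] at h2
        exact hdl w.2.1 w.2.2 w.1.2 hkl hn3 hn4 h2
    refine ⟨p₀, ?_⟩
    ext p
    rw [Finset.mem_inter, hAfm, hAfm, Finset.mem_singleton]
    constructor
    · rintro ⟨⟨ha1, _⟩, ⟨hb1, _⟩⟩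
      exact hup p ⟨ha1, hb1⟩
    · rintro rfl
      exact ⟨⟨hp₀.1, hp₀c⟩, ⟨hp₀.2, hp₀c⟩⟩
  -- the set of double points
  set D2 : Finset (Projectivization F (Fin 3 → F)) :=
    SU.filter (fun p => 2 ≤ deg p) with hD2
  have hD2eq : D2 = PPf.biUnion (fun w => Af w.1 ∩ Af w.2) := by
    ext p
    rw [hD2, Finset.mem_filter, Finset.mem_biUnion]
    constructor
    · rintro ⟨hpSU, hdegp⟩
      have h2 : 1 < (PRf.filter (fun z => p ∈ Af z)).card := hdegp
      obtain ⟨z, z', hz, hz', hzz'⟩ := Finset.one_lt_card_iff.mp h2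
      rw [Finset.mem_filter] at hz hz'
      have hnsh : ¬ Shares z z' := fun hsh => hAfAf z hz.1 z' hz'.1 hzz' hsh p hz.2 hz'.2
      rcases hPPcover z hz.1 z' hz'.1 hzz' hnsh with h | h
      · exact Finset.mem_biUnion.mpr ⟨(z,z'), h, Finset.mem_inter.mpr ⟨hz.2, hz'.2⟩⟩
      · exact Finset.mem_biUnion.mpr ⟨(z',z), h, Finset.mem_inter.mpr ⟨hz'.2, hz.2⟩⟩
    · intro hmem
      obtain ⟨w, hw, hpw⟩ := Finset.mem_biUnion.mp hmem
      obtain ⟨hw1, hw2, hwne, -⟩ := hPP1 w hw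
      rw [Finset.mem_inter] at hpw
      constructor
      · exact ⟨w.1, hw1, hpw.1⟩
      · exact Finset.one_lt_card_iff.mpr ⟨w.1, w.2, Finset.mem_filter.mpr ⟨hw1, hpw.1⟩,
          Finset.mem_filter.mpr ⟨hw2, hpw.2⟩, hwne⟩
  have hD2card : D2.card = 15 := by
    rw [hD2eq, Finset.card_biUnion]
    · have hone : ∀ w ∈ PPf, (Af w.1 ∩ Af w.2).card = 1 := by
        intro w hw
        obtain ⟨p₀, hp⟩ := hcross w hw
        rw [hp, Finset.card_singleton]
      rw [Finset.sum_congr rfl hone, Finset.sum_const, smul_eq_mul, mul_one, hPPcard]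
    · intro w hw w' hw' hww'
      rw [Function.onFun, Finset.disjoint_left]
      intro p hp hp'
      rw [Finset.mem_inter] at hp hp'
      have hw12 := (hPP1 w hw).2.2.1
      have h3 : 2 < deg p := by
        rcases hPP3 w hw w' hw' hww' with ⟨hne1, hne2⟩ | ⟨hne1, hne2⟩
        · exact Finset.two_lt_card_iff.mpr ⟨w.1, w.2, w'.1,
            Finset.mem_filter.mpr ⟨(hPP1 w hw).1, hp.1⟩,
            Finset.mem_filter.mpr ⟨(hPP1 w hw).2.1, hp.2⟩,
            Finset.mem_filter.mpr ⟨(hPP1 w' hw').1, hp'.1⟩,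
            hw12, Ne.symm hne1, Ne.symm hne2⟩
        · exact Finset.two_lt_card_iff.mpr ⟨w.1, w.2, w'.2,
            Finset.mem_filter.mpr ⟨(hPP1 w hw).1, hp.1⟩,
            Finset.mem_filter.mpr ⟨(hPP1 w hw).2.1, hp.2⟩,
            Finset.mem_filter.mpr ⟨(hPP1 w' hw').2.1, hp'.2⟩,
            hw12, Ne.symm hne1, Ne.symm hne2⟩
      exact absurd h3 (not_lt.mpr (hdeg2 p))
  -- double counting
  have hAfSU : ∀ z ∈ PRf, Af z ⊆ SU := by
    intro z hz
    intro p hp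
    exact Finset.mem_biUnion.mpr ⟨z, hz, hp⟩
  have hsum1 : ∑ z ∈ PRf, (Af z).card = SU.card + D2.card := by
    calc ∑ z ∈ PRf, (Af z).card
        = ∑ z ∈ PRf, ∑ p ∈ SU, (if p ∈ Af z then 1 else 0) := by
          refine Finset.sum_congr rfl fun z hz => ?_
          rw [← Finset.card_filter, Finset.filter_mem_eq_inter,
            Finset.inter_eq_right.mpr (hAfSU z hz)]
      _ = ∑ p ∈ SU, ∑ z ∈ PRf, (if p ∈ Af z then 1 else 0) := Finset.sum_comm
      _ = ∑ p ∈ SU, deg p := by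
          refine Finset.sum_congr rfl fun p hp => ?_
          exact (Finset.card_filter _ _).symm
      _ = ∑ p ∈ SU, (1 + if p ∈ D2 then 1 else 0) := by
          refine Finset.sum_congr rfl fun p hp => ?_
          have h1 : 1 ≤ deg p := by
            obtain ⟨z, hz, hpz⟩ := Finset.mem_biUnion.mp hp
            exact Finset.card_pos.mpr ⟨z, Finset.mem_filter.mpr ⟨hz, hpz⟩⟩
          have h2 := hdeg2 p
          by_cases hpD : p ∈ D2
          · have h3 : 2 ≤ deg p := (Finset.mem_filter.mp hpD).2
            simp only [hpD, if_true]
            omega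
          · have h3 : ¬ 2 ≤ deg p := fun h => hpD (Finset.mem_filter.mpr ⟨hp, h⟩)
            simp only [hpD, if_false]
            omega
      _ = SU.card + D2.card := by
          rw [Finset.sum_add_distrib, Finset.sum_const, smul_eq_mul, mul_one,
            Finset.sum_boole]
          congr 1
          rw [Nat.cast_id]
          congr 1
          ext p
          rw [Finset.mem_filter]
          constructor
          · exact fun h => h.2
          · intro h
            refine ⟨?_, h⟩
            exact (Finset.mem_filter.mp h).1
  have hsum10 : ∑ z ∈ PRf, (Af z).card = 10 * (q - 1) := by
    rw [Finset.sum_congr rfl hAfcard, Finset.sum_const, smul_eq_mul, hPRcard]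
  -- the union
  have hU : univ.filter (· ∈ conicPoints Q ∪ linesThrough P) = Cf ∪ SU := by
    ext p
    simp only [Finset.mem_filter, Finset.mem_univ, true_and, Finset.mem_union, Set.mem_union]
    constructor
    · intro h
      by_cases hc : p ∈ conicPoints Q
      · left; exact (hCfm p).mpr hc
      · right
        rcases h with h | h
        · exact absurd h hc
        · obtain ⟨i, j, hij, hdet⟩ := h
          have hline : p ∈ CP.lineSet (P i) (P j) := hdet
          rcases hPRcover i j hij with hin | hin
          · exact Finset.mem_biUnion.mpr ⟨(i,j), hin, (hAfm _ p).mpr ⟨hline, hc⟩⟩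
          · rw [CP.lineSet_symm] at hline
            exact Finset.mem_biUnion.mpr ⟨(j,i), hin, (hAfm _ p).mpr ⟨hline, hc⟩⟩
    · intro h
      rcases h with h | h
      · left; exact (hCfm p).mp h
      · obtain ⟨z, hz, hpz⟩ := Finset.mem_biUnion.mp h
        right
        exact ⟨z.1, z.2, hPR1 z hz, ((hAfm z p).mp hpz).1⟩
  have hdisj : Disjoint Cf SU := by
    rw [Finset.disjoint_left]
    intro p hp hp2
    obtain ⟨z, hz, hpz⟩ := Finset.mem_biUnion.mp hp2
    exact ((hAfm z p).mp hpz).2 ((hCfm p).mp hp)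
  have hfinal : Nat.card {p : Projectivization F (Fin 3 → F) //
      p ∈ conicPoints Q ∪ linesThrough P}
      = (univ.filter (· ∈ conicPoints Q ∪ linesThrough P)).card := by
    have h1 : Nat.card {p : Projectivization F (Fin 3 → F) //
        p ∈ conicPoints Q ∪ linesThrough P}
        = (conicPoints Q ∪ linesThrough P).ncard :=
      Nat.card_coe_set_eq (conicPoints Q ∪ linesThrough P)
    rw [h1, ← htf]
    apply congrArg Finset.card
    apply Finset.filter_congr_decidable
  rw [hfinal, hU, Finset.card_union_of_disjoint hdisj, hCfcard]
  omega
end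

section
/- Let α_1,...,α_6 be a basis of 𝔽_{q^6} over 𝔽_q. Then the determinant of the 6×6 matrix whose i-th row is (1, α_i², α_i⁶, α_i, α_i³, α_i⁴) (the conic-condition matrix for the points [1 : α_i : α_i³]) equals ∏_{1≤i<j≤6} (α_j − α_i) · (α_1 + ⋯ + α_6), which is nonzero; hence the six points [1 : α_i : α_i³] do not lie on a common conic. -/
open Finset in
set_option maxRecDepth 8000 in
set_option maxHeartbeats 1600000 in
lemma det_eq_aux {K : Type*} [Field K] (α : Fin 6 → K) :
    (Matrix.of (fun i : Fin 6 =>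
        ![1, α i ^ 2, α i ^ 6, α i, α i ^ 3, α i ^ 4])).det
      = (∏ p ∈ Finset.univ.filter (fun p : Fin 6 × Fin 6 => p.1 < p.2),
          (α p.2 - α p.1)) * (∑ i, α i) := by
  classical
  set a := α 0; set b := α 1; set c := α 2; set d := α 3; set e := α 4; set f := α 5
  -- elementary symmetric values
  set e1 : K := a+b+c+d+e+f with he1
  set e2 : K := a*b+a*c+a*d+a*e+a*f+b*c+b*d+b*e+b*f+c*d+c*e+c*f+d*e+d*f+e*f with he2
  set e3 : K := a*b*c+a*b*d+a*b*e+a*b*f+a*c*d+a*c*e+a*c*f+a*d*e+a*d*f+a*e*f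
      +b*c*d+b*c*e+b*c*f+b*d*e+b*d*f+b*e*f+c*d*e+c*d*f+c*e*f+d*e*f with he3
  set e4 : K := a*b*c*d+a*b*c*e+a*b*c*f+a*b*d*e+a*b*d*f+a*b*e*f+a*c*d*e+a*c*d*f
      +a*c*e*f+a*d*e*f+b*c*d*e+b*c*d*f+b*c*e*f+b*d*e*f+c*d*e*f with he4
  set e5 : K := a*b*c*d*e+a*b*c*d*f+a*b*c*e*f+a*b*d*e*f+a*c*d*e*f+b*c*d*e*f with he5
  set e6 : K := a*b*c*d*e*f with he6
  have hcol : ∀ i : Fin 6, α i ^ 6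
      = e1 * α i ^ 5 - e2 * α i ^ 4 + e3 * α i ^ 3 - e4 * α i ^ 2 + e5 * α i - e6 := by
    intro i
    have h0 : (∏ j, (α i - α j)) = 0 :=
      Finset.prod_eq_zero (Finset.mem_univ i) (sub_self _)
    rw [Fin.prod_univ_six] at h0
    linear_combination h0
  set V := Matrix.vandermonde α with hV
  set N : Matrix (Fin 6) (Fin 6) K := V.updateCol 5 (fun i => α i ^ 6) with hN
  -- permutation
  let σ : Equiv.Perm (Fin 6) :=
    ⟨![0,2,5,1,3,4], ![0,3,1,4,5,2], by decide, by decide⟩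
  have hsign : Equiv.Perm.sign σ = 1 := by decide
  have hM : (Matrix.of (fun i : Fin 6 =>
        ![1, α i ^ 2, α i ^ 6, α i, α i ^ 3, α i ^ 4])) = N.submatrix id σ := by
    ext i j
    fin_cases j <;>
      simp [hN, hV, Matrix.submatrix_apply, Matrix.updateCol_apply,
        Matrix.vandermonde_apply, σ] <;> first | rfl | norm_num
  have h5 : V.updateCol 5 (fun i => α i ^ 5) = V := by
    rw [show (fun i => α i ^ 5) = (fun i => V i 5) from rfl]
    exact Matrix.updateCol_eq_self V 5
  have hk0 : (V.updateCol 5 (fun i => α i ^ 0)).det = 0 :=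
    Matrix.det_zero_of_column_eq (show (0 : Fin 6) ≠ 5 by decide)
      (fun r => by simp [Matrix.updateCol_apply, Matrix.vandermonde_apply, hV] <;> rfl)
  have hk1 : (V.updateCol 5 (fun i => α i ^ 1)).det = 0 :=
    Matrix.det_zero_of_column_eq (show (1 : Fin 6) ≠ 5 by decide)
      (fun r => by simp [Matrix.updateCol_apply, Matrix.vandermonde_apply, hV] <;> rfl)
  have hk2 : (V.updateCol 5 (fun i => α i ^ 2)).det = 0 :=
    Matrix.det_zero_of_column_eq (show (2 : Fin 6) ≠ 5 by decide)
      (fun r => by simp [Matrix.updateCol_apply, Matrix.vandermonde_apply, hV] <;> rfl)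
  have hk3 : (V.updateCol 5 (fun i => α i ^ 3)).det = 0 :=
    Matrix.det_zero_of_column_eq (show (3 : Fin 6) ≠ 5 by decide)
      (fun r => by simp [Matrix.updateCol_apply, Matrix.vandermonde_apply, hV] <;> rfl)
  have hk4 : (V.updateCol 5 (fun i => α i ^ 4)).det = 0 :=
    Matrix.det_zero_of_column_eq (show (4 : Fin 6) ≠ 5 by decide)
      (fun r => by simp [Matrix.updateCol_apply, Matrix.vandermonde_apply, hV] <;> rfl)
  have hcolfun : (fun i => α i ^ 6)
      = (e1 • fun i => α i ^ 5) + ((-e2) • fun i => α i ^ 4) + (e3 • fun i => α i ^ 3)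
        + ((-e4) • fun i => α i ^ 2) + (e5 • fun i => α i ^ 1) + ((-e6) • fun i => α i ^ 0) := by
    funext i
    simp only [Pi.add_apply, Pi.smul_apply, smul_eq_mul, hcol i]
    ring
  have hdetN : N.det = e1 * V.det := by
    rw [hN, hcolfun, Matrix.det_updateCol_add, Matrix.det_updateCol_add,
      Matrix.det_updateCol_add, Matrix.det_updateCol_add, Matrix.det_updateCol_add,
      Matrix.det_updateCol_smul, Matrix.det_updateCol_smul, Matrix.det_updateCol_smul,
      Matrix.det_updateCol_smul, Matrix.det_updateCol_smul, Matrix.det_updateCol_smul,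
      h5, hk0, hk1, hk2, hk3, hk4]
    ring
  have hpair : (∏ p ∈ Finset.univ.filter (fun p : Fin 6 × Fin 6 => p.1 < p.2),
      (α p.2 - α p.1)) = ∏ i : Fin 6, ∏ j ∈ Finset.Ioi i, (α j - α i) := by
    rw [Finset.prod_filter, Fintype.prod_prod_type]
    refine Finset.prod_congr rfl fun i _ => ?_
    rw [show Finset.Ioi i = Finset.filter (fun j => i < j) Finset.univ from by ext j; simp,
      Finset.prod_filter]
  rw [hM, Matrix.det_permute', hsign, hdetN, Matrix.det_vandermonde, hpair]
  have hsum : (∑ i, α i) = e1 := by rw [Fin.sum_univ_six]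
  rw [hsum]
  push_cast
  ring


private noncomputable def mexp6 : Fin 6 → (Fin 3 →₀ ℕ)
  | 0 => Finsupp.single 0 2
  | 1 => Finsupp.single 1 2
  | 2 => Finsupp.single 2 2
  | 3 => Finsupp.single 0 1 + Finsupp.single 1 1
  | 4 => Finsupp.single 0 1 + Finsupp.single 2 1
  | 5 => Finsupp.single 1 1 + Finsupp.single 2 1

private def mtab6 : Fin 6 → Fin 3 → ℕ
  | 0 => ![2,0,0]
  | 1 => ![0,2,0]
  | 2 => ![0,0,2]
  | 3 => ![1,1,0]
  | 4 => ![1,0,1]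
  | 5 => ![0,1,1]

private def mrow6 {K : Type*} [Field K] (x : K) : Fin 6 → K
  | 0 => 1
  | 1 => x ^ 2
  | 2 => x ^ 6
  | 3 => x
  | 4 => x ^ 3
  | 5 => x ^ 4

private lemma mexp6_val : ∀ j k, mexp6 j k = mtab6 j k := by
  intro j k
  fin_cases j <;> fin_cases k <;>
    simp [mexp6, mtab6, Finsupp.single_apply]

private lemma mexp6_inj : Function.Injective mexp6 := by
  intro a b hab
  have h0 := DFunLike.congr_fun hab 0
  have h1 := DFunLike.congr_fun hab 1
  rw [mexp6_val, mexp6_val] at h0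
  rw [mexp6_val, mexp6_val] at h1
  fin_cases a <;> fin_cases b <;> first | rfl | (exfalso; simp [mtab6] at h0 h1)

private lemma mexp6_complete (d : Fin 3 →₀ ℕ) (h : d 0 + d 1 + d 2 = 2) :
    ∃ j : Fin 6, d = mexp6 j := by
  have hcases : (d 0 = 2 ∧ d 1 = 0 ∧ d 2 = 0) ∨ (d 0 = 0 ∧ d 1 = 2 ∧ d 2 = 0) ∨
      (d 0 = 0 ∧ d 1 = 0 ∧ d 2 = 2) ∨ (d 0 = 1 ∧ d 1 = 1 ∧ d 2 = 0) ∨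
      (d 0 = 1 ∧ d 1 = 0 ∧ d 2 = 1) ∨ (d 0 = 0 ∧ d 1 = 1 ∧ d 2 = 1) := by omega
  rcases hcases with ⟨h0,h1,h2⟩|⟨h0,h1,h2⟩|⟨h0,h1,h2⟩|⟨h0,h1,h2⟩|⟨h0,h1,h2⟩|⟨h0,h1,h2⟩
  · exact ⟨0, Finsupp.ext fun i => by fin_cases i <;> simp [mexp6, Finsupp.single_apply, h0,h1,h2]⟩
  · exact ⟨1, Finsupp.ext fun i => by fin_cases i <;> simp [mexp6, Finsupp.single_apply, h0,h1,h2]⟩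
  · exact ⟨2, Finsupp.ext fun i => by fin_cases i <;> simp [mexp6, Finsupp.single_apply, h0,h1,h2]⟩
  · exact ⟨3, Finsupp.ext fun i => by fin_cases i <;> simp [mexp6, Finsupp.single_apply, h0,h1,h2]⟩
  · exact ⟨4, Finsupp.ext fun i => by fin_cases i <;> simp [mexp6, Finsupp.single_apply, h0,h1,h2]⟩
  · exact ⟨5, Finsupp.ext fun i => by fin_cases i <;> simp [mexp6, Finsupp.single_apply, h0,h1,h2]⟩

set_option maxRecDepth 2000 in
private theorem aux_parts {F K : Type*} [Field F] [Fintype F]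
    [Field K] [Algebra F K]
    (α : Fin 6 → K)
    (hbasis : LinearIndependent F α) :
    (∏ p ∈ Finset.univ.filter (fun p : Fin 6 × Fin 6 => p.1 < p.2),
          (α p.2 - α p.1)) * (∑ i, α i) ≠ 0 ∧
    ¬ ∃ Q : MvPolynomial (Fin 3) K, Q.IsHomogeneous 2 ∧ Q ≠ 0 ∧
        ∀ i : Fin 6, MvPolynomial.eval ![1, α i, α i ^ 3] Q = 0 := by
  have hinj : Function.Injective α := hbasis.injective
  have hsum : (∑ i, α i) ≠ 0 := by
    intro h
    have := Fintype.linearIndependent_iff.mp hbasis (fun _ => (1 : F)) (by simpa using h) 0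
    simp at this
  have hne : (∏ p ∈ Finset.univ.filter (fun p : Fin 6 × Fin 6 => p.1 < p.2),
          (α p.2 - α p.1)) * (∑ i, α i) ≠ 0 := by
    refine mul_ne_zero (Finset.prod_ne_zero_iff.mpr ?_) hsum
    intro p hp
    simp only [Finset.mem_filter] at hp
    exact sub_ne_zero_of_ne fun h => absurd (hinj h.symm) (ne_of_lt hp.2)
  refine ⟨hne, ?_⟩
  rintro ⟨Q, hQhom, hQne, hQeval⟩
  have hMval : ∀ i j, (Matrix.of (fun i : Fin 6 =>
        ![1, α i ^ 2, α i ^ 6, α i, α i ^ 3, α i ^ 4])) i j = mrow6 (α i) j := by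
    intro i j; fin_cases j <;> rfl
  set c : Fin 6 → K := fun j => MvPolynomial.coeff (mexp6 j) Q with hc
  have hsupp : ∀ d ∈ Q.support, ∃ j, d = mexp6 j := by
    intro d hd
    have h2 : Finsupp.weight 1 d = 2 := hQhom (MvPolynomial.mem_support_iff.mp hd)
    apply mexp6_complete
    have hdeg : Finsupp.degree d = 2 := by rw [Finsupp.degree_eq_weight_one]; exact h2
    rw [Finsupp.degree_apply, Finset.sum_subset (Finset.subset_univ _)
      (by intro x _ hx; simpa using hx), Fin.sum_univ_three] at hdeg
    omega
  have hrow : ∀ (i : Fin 6) (j : Fin 6),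
      (∏ k, (![1, α i, α i ^ 3] : Fin 3 → K) k ^ (mexp6 j k)) = (Matrix.of (fun i : Fin 6 =>
        ![1, α i ^ 2, α i ^ 6, α i, α i ^ 3, α i ^ 4])) i j := by
    intro i j
    rw [hMval]
    fin_cases j <;>
      simp [mexp6_val, mtab6, mrow6, Fin.prod_univ_three] <;> ring
  have hmulvec : (Matrix.of (fun i : Fin 6 =>
        ![1, α i ^ 2, α i ^ 6, α i, α i ^ 3, α i ^ 4])).mulVec c = 0 := by
    funext i
    have he : MvPolynomial.eval ![1, α i, α i ^ 3] Q
        = ∑ j : Fin 6, (Matrix.of (fun i : Fin 6 =>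
        ![1, α i ^ 2, α i ^ 6, α i, α i ^ 3, α i ^ 4])) i j * c j := by
      rw [MvPolynomial.eval_eq']
      have hsub : Q.support ⊆ Finset.image mexp6 Finset.univ := by
        intro d hd
        obtain ⟨j, rfl⟩ := hsupp d hd
        exact Finset.mem_image_of_mem _ (Finset.mem_univ j)
      rw [Finset.sum_subset hsub (fun d _ hd => by
        rw [MvPolynomial.notMem_support_iff.mp hd, zero_mul])]
      rw [Finset.sum_image (fun a _ b _ h => mexp6_inj h)]
      refine Finset.sum_congr rfl fun j _ => ?_
      rw [hrow i j]; ring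
    have h0 := hQeval i
    rw [he] at h0
    simpa [Matrix.mulVec, dotProduct] using h0
  have hc0 : c = 0 := by
    apply Matrix.eq_zero_of_mulVec_eq_zero ?_ hmulvec
    rw [det_eq_aux α]; exact hne
  apply hQne
  apply MvPolynomial.ext
  intro d
  rw [MvPolynomial.coeff_zero]
  by_contra h
  obtain ⟨j, rfl⟩ := hsupp d (MvPolynomial.mem_support_iff.mpr h)
  exact h (by rw [show MvPolynomial.coeff (mexp6 j) Q = c j from rfl, hc0]; rfl)


set_option maxRecDepth 4000 in
/-- Let `α₁, …, α₆` be a basis of `𝔽_{q⁶}` over `𝔽_q`.  The determinant of the 6×6 matrix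
whose `i`-th row is `(1, α_i², α_i⁶, α_i, α_i³, α_i⁴)` (the conic-condition matrix for the
points `[1 : α_i : α_i³]`) equals `∏_{i<j} (α_j − α_i) · (α₁ + ⋯ + α₆)`, which is nonzero;
hence the six points `[1 : α_i : α_i³]` do not lie on a common conic. -/
theorem normal_basis_points_not_on_conic {F K : Type*} [Field F] [Fintype F]
    [Field K] [Algebra F K]
    (α : Fin 6 → K)
    (hbasis : LinearIndependent F α) :
    (Matrix.of (fun i : Fin 6 =>
        ![1, α i ^ 2, α i ^ 6, α i, α i ^ 3, α i ^ 4])).det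
      = (∏ p ∈ Finset.univ.filter (fun p : Fin 6 × Fin 6 => p.1 < p.2),
          (α p.2 - α p.1)) * (∑ i, α i) ∧
    (∏ p ∈ Finset.univ.filter (fun p : Fin 6 × Fin 6 => p.1 < p.2),
          (α p.2 - α p.1)) * (∑ i, α i) ≠ 0 ∧
    ¬ ∃ Q : MvPolynomial (Fin 3) K, Q.IsHomogeneous 2 ∧ Q ≠ 0 ∧
        ∀ i : Fin 6, MvPolynomial.eval ![1, α i, α i ^ 3] Q = 0 := by
  refine ⟨?_, aux_parts α hbasis⟩
  rw [det_eq_aux α]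
end
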